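/- arXiv:2112.10631 — 7 statements merged into one kernel-verified Lean document; each statement's English description precedes it below -/
import Mathlib

section
/- Let r ∈ C²((0,1]) ∩ C([0,1]) with r'(R) > 0 on (0,1] be a solution of the radial equilibrium equation with r(0) > 0, and assume δ(R) = r'(R)(r(R)/R)^{n−1} is bounded on (0,1]. Then r'(R) < r(R)/R for every R ∈ (0,1], and moreover r'(R) → 0 and r(R)/R → ∞ as R → 0⁺. -/
open Real MeasureTheory Filter Set
open scoped ENNReal NNReal

noncomputable section

/-- Radial stored energy `Φ(q, v, …, v) = (κ/n)(qⁿ + (n−1)vⁿ) + h(q v^{n−1})`,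
the restriction of `Φ(v₁,…,vₙ) = (κ/n)(v₁ⁿ+⋯+vₙⁿ) + h(v₁⋯vₙ)` to points
`(q, v, …, v)`. -/
def Phi (n : ℕ) (κ : ℝ) (h : ℝ → ℝ) (q v : ℝ) : ℝ :=
  (κ / n) * (q ^ n + ((n : ℝ) - 1) * v ^ n) + h (q * v ^ (n - 1))

/-- `Φ_{,1}(q, v, …, v) = κ q^{n−1} + v^{n−1} h'(q v^{n−1})`. -/
def Phi1 (n : ℕ) (κ : ℝ) (h' : ℝ → ℝ) (q v : ℝ) : ℝ :=
  κ * q ^ (n - 1) + v ^ (n - 1) * h' (q * v ^ (n - 1))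

/-- `Φ_{,2}(q, v, …, v) = κ v^{n−1} + q v^{n−2} h'(q v^{n−1})`. -/
def Phi2 (n : ℕ) (κ : ℝ) (h' : ℝ → ℝ) (q v : ℝ) : ℝ :=
  κ * v ^ (n - 1) + q * v ^ (n - 2) * h' (q * v ^ (n - 1))

/-- Radial Cauchy stress `T(q,v) = v^{1−n} Φ_{,1}(q,v,…,v) = κ(q/v)^{n−1} + h'(q v^{n−1})`. -/
def Tstress (n : ℕ) (κ : ℝ) (h' : ℝ → ℝ) (q v : ℝ) : ℝ :=
  κ * (q / v) ^ (n - 1) + h' (q * v ^ (n - 1))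

/-- The determinant function `δ(R) = r'(R) (r(R)/R)^{n−1}`. -/
def del (n : ℕ) (r r' : ℝ → ℝ) (R : ℝ) : ℝ :=
  r' R * (r R / R) ^ (n - 1)

/-- Hypotheses on `h : (0,∞) → [0,∞)`: it is `C²` with derivative `h'` and second
derivative `h''`, `h'' > 0`, `h(d) → ∞` as `d → 0⁺`, `h(d)/d → ∞` as `d → ∞`,
`h'(d) → −∞` as `d → 0⁺` and `h'(d) → ∞` as `d → ∞`. -/
structure GoodH (h h' h'' : ℝ → ℝ) : Prop where
  nonneg : ∀ d : ℝ, 0 < d → 0 ≤ h d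
  deriv1 : ∀ d : ℝ, 0 < d → HasDerivAt h (h' d) d
  deriv2 : ∀ d : ℝ, 0 < d → HasDerivAt h' (h'' d) d
  cont2 : ContinuousOn h'' (Set.Ioi 0)
  hpp_pos : ∀ d : ℝ, 0 < d → 0 < h'' d
  lim_zero : Tendsto h (nhdsWithin 0 (Set.Ioi 0)) atTop
  lim_growth : Tendsto (fun d => h d / d) atTop atTop
  dlim_zero : Tendsto h' (nhdsWithin 0 (Set.Ioi 0)) atBot
  dlim_top : Tendsto h' atTop atTop

/-- `r ∈ C²((0,1])`, with `r, r' > 0` on `(0,1]`, solving the radial equilibrium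
equation `(d/dR)[R^{n−1} Φ_{,1}(r(R))] = (n−1) R^{n−2} Φ_{,2}(r(R))`. -/
structure RadialSol (n : ℕ) (κ : ℝ) (h' : ℝ → ℝ) (r r' r'' : ℝ → ℝ) : Prop where
  pos : ∀ R ∈ Set.Ioc (0:ℝ) 1, 0 < r R
  derivPos : ∀ R ∈ Set.Ioc (0:ℝ) 1, 0 < r' R
  hasDeriv : ∀ R ∈ Set.Ioc (0:ℝ) 1, HasDerivWithinAt r (r' R) (Set.Ioc 0 1) R
  hasDeriv2 : ∀ R ∈ Set.Ioc (0:ℝ) 1, HasDerivWithinAt r' (r'' R) (Set.Ioc 0 1) R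
  cont2 : ContinuousOn r'' (Set.Ioc 0 1)
  equil : ∀ R ∈ Set.Ioc (0:ℝ) 1,
    HasDerivWithinAt (fun s => s ^ (n - 1) * Phi1 n κ h' (r' s) (r s / s))
      (((n : ℝ) - 1) * R ^ (n - 2) * Phi2 n κ h' (r' R) (r R / R)) (Set.Ioc 0 1) R



/-- Geometric-sum factor `∑_{i≤m} v^i q^{m-i}`. -/
def Pg (m : ℕ) (q v : ℝ) : ℝ := ∑ i ∈ Finset.range (m+1), v ^ i * q ^ (m - i)

lemma Pg_pos {m : ℕ} {q v : ℝ} (hq : 0 < q) (hv : 0 < v) : 0 < Pg m q v :=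
  Finset.sum_pos (fun i _ => by positivity) ⟨0, Finset.mem_range.mpr (by omega)⟩

lemma key_identity (m : ℕ) (κ : ℝ) (h' h'' : ℝ → ℝ)
    (hder2 : ∀ d : ℝ, 0 < d → HasDerivAt h' (h'' d) d)
    (r r' r'' : ℝ → ℝ) (hr : RadialSol (m+2) κ h' r r' r'')
    (R : ℝ) (hR : R ∈ Set.Ioc (0:ℝ) 1) :
    r'' R * (R * (κ * ((m:ℝ)+1) * (r' R) ^ m
        + (r R / R) ^ (2*m+2) * h'' (r' R * (r R / R) ^ (m+1))))
      = (r R / R - r' R) * (((m:ℝ)+1) * (κ * Pg m (r' R) (r R / R)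
        + r' R * (r R / R) ^ (2*m+1) * h'' (r' R * (r R / R) ^ (m+1)))) := by
  obtain ⟨hR0, hR1⟩ := hR
  have hRmem : R ∈ Set.Ioc (0:ℝ) 1 := ⟨hR0, hR1⟩
  set s : Set ℝ := Set.Ioc 0 1 with hs_def
  have hud : UniqueDiffWithinAt ℝ s R := uniqueDiffOn_Ioc 0 1 R hRmem
  have hq0 : 0 < r' R := hr.derivPos R hRmem
  have hv0 : 0 < r R / R := div_pos (hr.pos R hRmem) hR0
  have hd0 : 0 < r' R * (r R / R) ^ (m+1) := by positivity
  have h1 := hr.hasDeriv R hRmem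
  have h2 := hr.hasDeriv2 R hRmem
  have hid : HasDerivWithinAt (fun y : ℝ => y) 1 s R := hasDerivWithinAt_id R s
  have hv : HasDerivWithinAt (fun y => r y / y) ((r' R - r R / R)/R) s R := by
    have := h1.div hid hR0.ne'
    refine this.congr_deriv (Eq.symm ?_)
    rw [div_eq_div_iff hR0.ne' (by positivity), sub_mul, div_mul_eq_mul_div, pow_two,
      mul_div_assoc, mul_div_cancel_left₀ _ hR0.ne']
    ring
  have hvp : HasDerivWithinAt (fun y => (r y / y)^(m+1))
      (((m:ℝ)+1) * (r R / R)^m * ((r' R - r R / R)/R)) s R := by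
    have := hv.pow (m+1)
    refine this.congr_deriv (Eq.symm ?_)
    push_cast [Nat.add_sub_cancel]
    ring
  have hqp : HasDerivWithinAt (fun y => (r' y)^(m+1))
      (((m:ℝ)+1) * (r' R)^m * r'' R) s R := by
    have := h2.pow (m+1)
    refine this.congr_deriv (Eq.symm ?_)
    push_cast [Nat.add_sub_cancel]
    ring
  have hdm : HasDerivWithinAt (fun y => r' y * (r y / y)^(m+1))
      (r'' R * (r R / R)^(m+1) + r' R * (((m:ℝ)+1) * (r R / R)^m * ((r' R - r R / R)/R))) s R :=
    h2.mul hvp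
  have hH : HasDerivAt h' (h'' (r' R * (r R / R)^(m+1))) (r' R * (r R / R)^(m+1)) :=
    hder2 _ hd0
  have hcomp : HasDerivWithinAt (fun y => h' (r' y * (r y / y)^(m+1)))
      (h'' (r' R * (r R / R)^(m+1)) *
        (r'' R * (r R / R)^(m+1) + r' R * (((m:ℝ)+1) * (r R / R)^m * ((r' R - r R / R)/R)))) s R := by
    have := hH.comp_hasDerivWithinAt R hdm
    exact this
  have hinner : HasDerivWithinAt
      (fun y => κ * (r' y)^(m+1) + (r y / y)^(m+1) * h' (r' y * (r y / y)^(m+1)))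
      (κ * (((m:ℝ)+1) * (r' R)^m * r'' R)
        + ((((m:ℝ)+1) * (r R / R)^m * ((r' R - r R / R)/R)) * h' (r' R * (r R / R)^(m+1))
          + (r R / R)^(m+1) * (h'' (r' R * (r R / R)^(m+1)) *
            (r'' R * (r R / R)^(m+1) + r' R * (((m:ℝ)+1) * (r R / R)^m * ((r' R - r R / R)/R)))))) s R :=
    (hqp.const_mul κ).add (hvp.mul hcomp)
  have hRpow : HasDerivWithinAt (fun y : ℝ => y^(m+1)) (((m:ℝ)+1) * R^m * 1) s R := by
    have := hid.pow (m+1)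
    refine this.congr_deriv (Eq.symm ?_)
    push_cast [Nat.add_sub_cancel]
    ring
  have hF := hRpow.mul hinner
  have hE := hr.equil R hRmem
  have hE' : HasDerivWithinAt
      (fun y => y^(m+1) * (κ * (r' y)^(m+1) + (r y / y)^(m+1) * h' (r' y * (r y / y)^(m+1))))
      (((m:ℝ)+2-1) * R^m * (κ * (r R / R)^(m+1) + r' R * (r R / R)^m * h' (r' R * (r R / R)^(m+1)))) s R := by
    have h1' : m + 2 - 1 = m + 1 := rfl
    have h2' : m + 2 - 2 = m := rfl
    simp only [Phi1, Phi2, h1', h2'] at hE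
    push_cast at hE
    exact hE
  have heq : (((m:ℝ)+1) * R^m * 1) * (κ * (r' R)^(m+1) + (r R / R)^(m+1) * h' (r' R * (r R / R)^(m+1)))
      + R^(m+1) * (κ * (((m:ℝ)+1) * (r' R)^m * r'' R)
        + ((((m:ℝ)+1) * (r R / R)^m * ((r' R - r R / R)/R)) * h' (r' R * (r R / R)^(m+1))
          + (r R / R)^(m+1) * (h'' (r' R * (r R / R)^(m+1)) *
            (r'' R * (r R / R)^(m+1) + r' R * (((m:ℝ)+1) * (r R / R)^m * ((r' R - r R / R)/R))))))
      = ((m:ℝ)+2-1) * R^m * (κ * (r R / R)^(m+1) + r' R * (r R / R)^m * h' (r' R * (r R / R)^(m+1))) := by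
    rw [← hF.derivWithin hud, ← hE'.derivWithin hud]
    rfl
  have hP : Pg m (r' R) (r R / R) * (r R / R - r' R) = (r R / R)^(m+1) - (r' R)^(m+1) := by
    have := geom_sum₂_mul (r R / R) (r' R) (m+1)
    simpa [Pg] using this
  have hdiv : (r' R - r R / R) / R * R = r' R - r R / R := div_mul_cancel₀ _ hR0.ne'
  have key : r'' R * (R * (κ * ((m:ℝ)+1) * (r' R) ^ m
        + (r R / R) ^ (2*m+2) * h'' (r' R * (r R / R) ^ (m+1)))) * R^m
      = ((r R / R - r' R) * (((m:ℝ)+1) * (κ * Pg m (r' R) (r R / R)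
        + r' R * (r R / R) ^ (2*m+1) * h'' (r' R * (r R / R) ^ (m+1))))) * R^m := by
    linear_combination heq
      - (((m:ℝ)+1) * (r R / R)^m * h' (r' R * (r R / R)^(m+1)) * R^m
         + ((m:ℝ)+1) * r' R * (r R / R)^(2*m+1) * h'' (r' R * (r R / R)^(m+1)) * R^m) * hdiv
      - ((m:ℝ)+1) * R^m * κ * hP
  exact mul_right_cancel₀ (pow_ne_zero m hR0.ne') key

/-- a cavitating solution of the radial equilibrium equation with
bounded determinant satisfies `r'(R) < r(R)/R` on `(0,1]`, `r'(R) → 0` and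
`r(R)/R → ∞` as `R → 0⁺`. -/
theorem stmt0 (n : ℕ) (hn : 2 ≤ n) (κ : ℝ) (hκ : 0 < κ)
    (h h' h'' : ℝ → ℝ) (hh : GoodH h h' h'')
    (r r' r'' : ℝ → ℝ) (hr : RadialSol n κ h' r r' r'')
    (hcont : ContinuousOn r (Set.Icc 0 1)) (hcav : 0 < r 0)
    (hbdd : ∃ M : ℝ, ∀ R ∈ Set.Ioc (0:ℝ) 1, del n r r' R ≤ M) :
    (∀ R ∈ Set.Ioc (0:ℝ) 1, r' R < r R / R) ∧
    Tendsto r' (nhdsWithin 0 (Set.Ioi 0)) (nhds 0) ∧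
    Tendsto (fun R => r R / R) (nhdsWithin 0 (Set.Ioi 0)) atTop := by
  obtain ⟨M, hM⟩ := hbdd
  obtain ⟨m, rfl⟩ : ∃ m, n = m + 2 := ⟨n - 2, by omega⟩
  have hIocmem : Set.Ioc (0:ℝ) 1 ∈ nhdsWithin (0:ℝ) (Set.Ioi 0) :=
    Ioc_mem_nhdsGT_of_mem ⟨le_refl 0, zero_lt_one⟩
  -- Part 3 : r R / R → ∞
  have hrc0 : ContinuousWithinAt r (Set.Icc 0 1) 0 := hcont 0 ⟨le_refl 0, zero_le_one⟩
  have hIoc_eq : nhdsWithin (0:ℝ) (Set.Ioc 0 1) = nhdsWithin (0:ℝ) (Set.Ioi 0) := by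
    have h1 : Set.Iic (1:ℝ) ∈ nhdsWithin (0:ℝ) (Set.Ioi 0) :=
      mem_nhdsWithin_of_mem_nhds (Iic_mem_nhds zero_lt_one)
    have h2 : Set.Ioc (0:ℝ) 1 = Set.Iic 1 ∩ Set.Ioi 0 := by
      ext x; simp [Set.mem_Ioc, Set.mem_Iic, Set.mem_Ioi, and_comm]
    rw [h2, nhdsWithin_inter_of_mem h1]
  have hr0 : Tendsto r (nhdsWithin (0:ℝ) (Set.Ioi 0)) (nhds (r 0)) := by
    have := hrc0.tendsto.mono_left (nhdsWithin_mono _ Set.Ioc_subset_Icc_self)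
    rwa [hIoc_eq] at this
  have hvtop : Tendsto (fun R => r R / R) (nhdsWithin 0 (Set.Ioi 0)) atTop := by
    have := Tendsto.pos_mul_atTop hcav hr0 tendsto_inv_nhdsGT_zero
    simpa [div_eq_mul_inv] using this
  -- Part 2 : r' → 0
  have hvpowtop : Tendsto (fun R => (r R / R)^(m+1)) (nhdsWithin 0 (Set.Ioi 0)) atTop :=
    (tendsto_pow_atTop (by omega : m + 1 ≠ 0)).comp hvtop
  have hq0tend : Tendsto r' (nhdsWithin 0 (Set.Ioi 0)) (nhds 0) := by
    apply squeeze_zero' (g := fun R => M / (r R / R)^(m+1))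
    · filter_upwards [hIocmem] with R hR
      exact (hr.derivPos R hR).le
    · filter_upwards [hIocmem] with R hR
      have hv0 : 0 < r R / R := div_pos (hr.pos R hR) hR.1
      have hd := hM R hR
      simp only [del] at hd
      have : (m + 2 - 1) = m + 1 := rfl
      rw [this] at hd
      exact (le_div_iff₀ (by positivity)).mpr hd
    · exact Tendsto.div_atTop tendsto_const_nhds hvpowtop
  refine ⟨?_, hq0tend, hvtop⟩
  -- Part 1 : r' R < r R / R
  set w : ℝ → ℝ := fun R => r R / R - r' R with hw_def
  have hrcont : ContinuousOn r (Set.Ioc 0 1) :=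
    fun R hR => (hr.hasDeriv R hR).continuousWithinAt
  have hr'cont : ContinuousOn r' (Set.Ioc 0 1) :=
    fun R hR => (hr.hasDeriv2 R hR).continuousWithinAt
  have hvcont : ContinuousOn (fun R => r R / R) (Set.Ioc 0 1) :=
    hrcont.div continuousOn_id (fun R hR => hR.1.ne')
  have hwcont : ContinuousOn w (Set.Ioc 0 1) := hvcont.sub hr'cont
  have hwtop : Tendsto w (nhdsWithin 0 (Set.Ioi 0)) atTop := by
    have hneg : Tendsto (fun x => -(r' x)) (nhdsWithin 0 (Set.Ioi 0)) (nhds 0) := by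
      simpa using hq0tend.neg
    have := Tendsto.add_atTop (C := (0:ℝ)) hneg hvtop
    apply this.congr
    intro x; simp [hw_def]; ring
  obtain ⟨u, hu, hIoo⟩ := mem_nhdsGT_iff_exists_Ioo_subset.mp
    (hwtop.eventually_gt_atTop 0)
  -- positivity of d, C, and the G factor
  have hd0pos : ∀ R ∈ Set.Ioc (0:ℝ) 1, 0 < r' R * (r R / R)^(m+1) := by
    intro R hR
    have hq := hr.derivPos R hR
    have hv : 0 < r R / R := div_pos (hr.pos R hR) hR.1
    positivity
  set Cf : ℝ → ℝ := fun R => κ * ((m:ℝ)+1) * (r' R) ^ m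
      + (r R / R) ^ (2*m+2) * h'' (r' R * (r R / R) ^ (m+1)) with hCf_def
  set Gn : ℝ → ℝ := fun R => ((m:ℝ)+1) * (κ * Pg m (r' R) (r R / R)
      + r' R * (r R / R) ^ (2*m+1) * h'' (r' R * (r R / R) ^ (m+1))) with hGn_def
  have hCfpos : ∀ R ∈ Set.Ioc (0:ℝ) 1, 0 < Cf R := by
    intro R hR
    have hq := hr.derivPos R hR
    have hv : 0 < r R / R := div_pos (hr.pos R hR) hR.1
    have hH2 := hh.hpp_pos _ (hd0pos R hR)
    have h1 : 0 < κ * ((m:ℝ)+1) * (r' R) ^ m := by positivity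
    have h2 : 0 < (r R / R) ^ (2*m+2) * h'' (r' R * (r R / R) ^ (m+1)) := by positivity
    simp only [hCf_def]
    linarith
  have hGnpos : ∀ R ∈ Set.Ioc (0:ℝ) 1, 0 < Gn R := by
    intro R hR
    have hq := hr.derivPos R hR
    have hv : 0 < r R / R := div_pos (hr.pos R hR) hR.1
    have hH2 := hh.hpp_pos _ (hd0pos R hR)
    have hPg := Pg_pos (m := m) hq hv
    have h1 : 0 < κ * Pg m (r' R) (r R / R) := by positivity
    have h2 : 0 < r' R * (r R / R) ^ (2*m+1) * h'' (r' R * (r R / R) ^ (m+1)) := by positivity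
    simp only [hGn_def]
    have : (0:ℝ) < (m:ℝ) + 1 := by positivity
    nlinarith
  have hr''eq : ∀ R ∈ Set.Ioc (0:ℝ) 1, r'' R = w R * (Gn R / (R * Cf R)) := by
    intro R hR
    have hkey := key_identity m κ h' h'' hh.deriv2 r r' r'' hr R hR
    have hRC : R * Cf R ≠ 0 := (mul_pos hR.1 (hCfpos R hR)).ne'
    rw [mul_div_assoc']
    rw [eq_div_iff hRC]
    simp only [hw_def, hGn_def, hCf_def]
    linear_combination hkey
  -- the coefficient function A and its continuity
  set A : ℝ → ℝ := fun R => 1 / R + Gn R / (R * Cf R) with hA_def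
  have hH2cont : ContinuousOn (fun R => h'' (r' R * (r R / R)^(m+1))) (Set.Ioc 0 1) := by
    apply hh.cont2.comp (hr'cont.mul (hvcont.pow (m+1)))
    intro R hR
    exact Set.mem_Ioi.mpr (hd0pos R hR)
  have hPgcont : ContinuousOn (fun R => Pg m (r' R) (r R / R)) (Set.Ioc 0 1) := by
    simp only [Pg]
    apply continuousOn_finset_sum
    intro i _
    exact (hvcont.pow i).mul (hr'cont.pow (m - i))
  have hCfcont : ContinuousOn Cf (Set.Ioc 0 1) := by
    simp only [hCf_def]
    exact (continuousOn_const.mul (hr'cont.pow m)).add ((hvcont.pow (2*m+2)).mul hH2cont)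
  have hGncont : ContinuousOn Gn (Set.Ioc 0 1) := by
    simp only [hGn_def]
    exact continuousOn_const.mul ((continuousOn_const.mul hPgcont).add
      ((hr'cont.mul (hvcont.pow (2*m+1))).mul hH2cont))
  have hAcont : ContinuousOn A (Set.Ioc 0 1) := by
    simp only [hA_def]
    apply ContinuousOn.add
    · exact continuousOn_const.div continuousOn_id (fun R hR => hR.1.ne')
    · exact hGncont.div (continuousOn_id.mul hCfcont)
        (fun R hR => (mul_pos hR.1 (hCfpos R hR)).ne')
  -- main contradiction argument
  intro R₀ hR₀
  by_contra hcon
  push_neg at hcon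
  have hwR₀ : w R₀ ≤ 0 := by simp only [hw_def]; linarith
  have hnotIoo : ∀ R ∈ Set.Ioc (0:ℝ) 1, w R ≤ 0 → u ≤ R := by
    intro R hR hwR
    by_contra hlt
    push_neg at hlt
    exact absurd (hIoo ⟨hR.1, hlt⟩) (by simpa using hwR)
  have huR₀ : u ≤ R₀ := hnotIoo R₀ hR₀ hwR₀
  set S : Set ℝ := Set.Icc u 1 ∩ w ⁻¹' (Set.Iic 0) with hS_def
  have hsubS : Set.Icc u 1 ⊆ Set.Ioc (0:ℝ) 1 :=
    fun x hx => ⟨lt_of_lt_of_le hu hx.1, hx.2⟩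
  have hScl : IsClosed S :=
    ContinuousOn.preimage_isClosed_of_isClosed (hwcont.mono hsubS) isClosed_Icc isClosed_Iic
  have hSne : S.Nonempty := ⟨R₀, ⟨⟨huR₀, hR₀.2⟩, by simpa using hwR₀⟩⟩
  have hSbdd : BddBelow S := ⟨u, fun x hx => hx.1.1⟩
  set R₁ : ℝ := sInf S with hR₁_def
  have hR₁S : R₁ ∈ S := IsClosed.csInf_mem hScl hSne hSbdd
  have hR₁pos : 0 < R₁ := lt_of_lt_of_le hu hR₁S.1.1
  have hR₁le1 : R₁ ≤ 1 := hR₁S.1.2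
  have hwR₁ : w R₁ ≤ 0 := hR₁S.2
  have hwpos : ∀ R ∈ Set.Ioc (0:ℝ) 1, R < R₁ → 0 < w R := by
    intro R hR hlt
    by_contra hc
    push_neg at hc
    have : R ∈ S := ⟨⟨hnotIoo R hR hc, hR.2⟩, by simpa using hc⟩
    exact absurd (csInf_le hSbdd this) (not_le.mpr hlt)
  have hIsub : Set.Icc (R₁/2) R₁ ⊆ Set.Ioc (0:ℝ) 1 :=
    fun x hx => ⟨lt_of_lt_of_le (half_pos hR₁pos) hx.1, le_trans hx.2 hR₁le1⟩
  obtain ⟨K, hK⟩ := (isCompact_Icc (a := R₁/2) (b := R₁)).exists_bound_of_continuousOn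
    (hAcont.mono hIsub)
  set φ : ℝ → ℝ := fun R => w R * Real.exp (K * R) with hφ_def
  have hφcont : ContinuousOn φ (Set.Icc (R₁/2) R₁) :=
    (hwcont.mono hIsub).mul (Real.continuous_exp.comp (continuous_const.mul continuous_id)).continuousOn
  have hmemIoo : ∀ x ∈ Set.Ioo (R₁/2) R₁, Set.Ioc (0:ℝ) 1 ∈ nhds x := by
    intro x hx
    exact Ioc_mem_nhds (lt_of_lt_of_le (half_pos hR₁pos) hx.1.le)
      (lt_of_lt_of_le hx.2 hR₁le1)
  have hφderiv : ∀ x ∈ Set.Ioo (R₁/2) R₁, HasDerivAt φ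
      (((r' x * x - r x * 1) / x^2 - r'' x) * Real.exp (K * x)
        + w x * (Real.exp (K * x) * K)) x := by
    intro x hx
    have hxmem : x ∈ Set.Ioc (0:ℝ) 1 := hIsub (Set.Ioo_subset_Icc_self hx)
    have hnb := hmemIoo x hx
    have hrd : HasDerivAt r (r' x) x := (hr.hasDeriv x hxmem).hasDerivAt hnb
    have hrd2 : HasDerivAt r' (r'' x) x := (hr.hasDeriv2 x hxmem).hasDerivAt hnb
    have hvd : HasDerivAt (fun y => r y / y) ((r' x * x - r x * 1) / x^2) x :=
      hrd.div (hasDerivAt_id x) hxmem.1.ne'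
    have hwd : HasDerivAt w ((r' x * x - r x * 1) / x^2 - r'' x) x := hvd.sub hrd2
    have hlin : HasDerivAt (fun y : ℝ => K * y) K x := by
      simpa using (hasDerivAt_id x).const_mul K
    exact hwd.mul hlin.exp
  have hφmono : MonotoneOn φ (Set.Icc (R₁/2) R₁) := by
    apply monotoneOn_of_deriv_nonneg (convex_Icc _ _) hφcont
    · intro x hx
      rw [interior_Icc] at hx
      exact ((hφderiv x hx).differentiableAt).differentiableWithinAt
    · intro x hx
      rw [interior_Icc] at hx
      rw [(hφderiv x hx).deriv]
      have hxmem : x ∈ Set.Ioc (0:ℝ) 1 := hIsub (Set.Ioo_subset_Icc_self hx)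
      have hx0 : (0:ℝ) < x := hxmem.1
      have hwx : 0 < w x := hwpos x hxmem hx.2
      have hr'' := hr''eq x hxmem
      have hval : (r' x * x - r x * 1) / x^2 = -(w x) / x := by
        simp only [hw_def]
        rw [div_eq_div_iff (by positivity) hx0.ne']
        field_simp
        ring
      rw [hval, hr'']
      have hAx : A x ≤ K := by
        have := hK x (Set.Ioo_subset_Icc_self hx)
        exact le_trans (le_abs_self _) (by simpa [Real.norm_eq_abs] using this)
      have hKA : 0 ≤ K - A x := by linarith
      have hexp : 0 < Real.exp (K * x) := Real.exp_pos _
      have hident : -(w x) / x * Real.exp (K * x) - w x * (Gn x / (x * Cf x)) * Real.exp (K * x)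
          + w x * (Real.exp (K * x) * K)
          = Real.exp (K * x) * (w x * (K - A x)) := by
        simp only [hA_def]
        field_simp
        ring
      have : -(w x) / x * Real.exp (K * x) - w x * (Gn x / (x * Cf x)) * Real.exp (K * x)
          + w x * (Real.exp (K * x) * K) ≥ 0 := by
        rw [hident]
        positivity
      linarith [this]
  have hmem1 : R₁/2 ∈ Set.Icc (R₁/2) R₁ := ⟨le_refl _, by linarith⟩
  have hmem2 : R₁ ∈ Set.Icc (R₁/2) R₁ := ⟨by linarith, le_refl _⟩
  have hle : φ (R₁/2) ≤ φ R₁ := hφmono hmem1 hmem2 (by linarith)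
  have hφR₁ : φ R₁ ≤ 0 := mul_nonpos_of_nonpos_of_nonneg hwR₁ (Real.exp_pos _).le
  have hwhalf : 0 < w (R₁/2) := hwpos (R₁/2) (hIsub hmem1) (by linarith)
  have hφhalf : 0 < φ (R₁/2) := mul_pos hwhalf (Real.exp_pos _)
  linarith

end
end

section
/- If r ∈ C²((0,1]) with r'(R) > 0 is a solution of the radial equilibrium equation, then for every R ∈ (0,1) the divergence identity holds: R^{n−1} Φ(r'(R), v(R), …, v(R)) = (d/dR)[ (Rⁿ/n)(Φ(r'(R), v(R), …, v(R)) − r'(R) Φ_{,1}(r(R))) + (r(R)ⁿ/n) T(r(R)) ]. -/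
open Real MeasureTheory Filter Set
open scoped ENNReal NNReal

noncomputable section

/-- the divergence identity
`R^{n−1} Φ(r(R)) = (d/dR)[(Rⁿ/n)(Φ(r(R)) − r'(R)Φ_{,1}(r(R))) + (r(R)ⁿ/n) T(r(R))]`
holds for any solution of the radial equilibrium equation. -/
theorem stmt2 (n : ℕ) (hn : 2 ≤ n) (κ : ℝ) (hκ : 0 < κ)
    (h h' h'' : ℝ → ℝ) (hh : GoodH h h' h'')
    (r r' r'' : ℝ → ℝ) (hr : RadialSol n κ h' r r' r'') :
    ∀ R ∈ Set.Ioo (0:ℝ) 1,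
      HasDerivAt (fun s => (s ^ n / n) *
            (Phi n κ h (r' s) (r s / s) - r' s * Phi1 n κ h' (r' s) (r s / s)) +
          (r s) ^ n / n * Tstress n κ h' (r' s) (r s / s))
        (R ^ (n - 1) * Phi n κ h (r' R) (r R / R)) R := by
  obtain ⟨m, rfl⟩ : ∃ m, n = m + 2 := ⟨n - 2, by omega⟩
  intro R hR
  obtain ⟨hR0, hR1⟩ := hR
  have hRmem : R ∈ Set.Ioc (0:ℝ) 1 := ⟨hR0, le_of_lt hR1⟩
  have hnhds : Set.Ioc (0:ℝ) 1 ∈ nhds R :=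
    mem_nhds_iff.mpr ⟨Set.Ioo 0 1, Set.Ioo_subset_Ioc_self, isOpen_Ioo, ⟨hR0, hR1⟩⟩
  have hRne : R ≠ 0 := ne_of_gt hR0
  have hrpos : 0 < r R := hr.pos R hRmem
  have hr'pos : 0 < r' R := hr.derivPos R hRmem
  have hdr : HasDerivAt r (r' R) R := (hr.hasDeriv R hRmem).hasDerivAt hnhds
  have hdr' : HasDerivAt r' (r'' R) R := (hr.hasDeriv2 R hRmem).hasDerivAt hnhds
  -- derivative of v(s) = r s / s
  have hdv : HasDerivAt (fun s => r s / s) ((r' R * R - r R * 1) / R ^ 2) R :=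
    hdr.div (hasDerivAt_id R) hRne
  set v' : ℝ := (r' R * R - r R * 1) / R ^ 2 with hv'def
  -- derivative of δ(s) = r' s * (r s / s)^(m+1)
  have hdδ : HasDerivAt (fun s => r' s * (r s / s) ^ (m + 1))
      (r'' R * (r R / R) ^ (m + 1) + r' R * (((m+1 : ℕ) : ℝ) * (r R / R) ^ m * v')) R := by
    have := hdr'.mul (hdv.pow (m + 1))
    simpa [Pi.mul_def, Pi.pow_def] using this
  have hδpos : 0 < r' R * (r R / R) ^ (m + 1) :=
    mul_pos hr'pos (pow_pos (div_pos hrpos hR0) _)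
  have hdh : HasDerivAt (fun s => h (r' s * (r s / s) ^ (m + 1)))
      (h' (r' R * (r R / R) ^ (m + 1)) *
        (r'' R * (r R / R) ^ (m + 1) + r' R * (((m+1 : ℕ) : ℝ) * (r R / R) ^ m * v'))) R :=
    (hh.deriv1 _ hδpos).comp R hdδ
  -- derivative of Φ(s)
  have hdΦ : HasDerivAt (fun s => Phi (m+2) κ h (r' s) (r s / s))
      ((κ / (m+2 : ℕ)) * (((m+2 : ℕ) : ℝ) * r' R ^ (m+1) * r'' R +
          (((m+2 : ℕ) : ℝ) - 1) * (((m+2 : ℕ) : ℝ) * (r R / R) ^ (m+1) * v')) +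
        h' (r' R * (r R / R) ^ (m + 1)) *
          (r'' R * (r R / R) ^ (m + 1) + r' R * (((m+1 : ℕ) : ℝ) * (r R / R) ^ m * v'))) R := by
    have h1 : HasDerivAt (fun s => (κ / ((m+2 : ℕ) : ℝ)) *
        ((r' s) ^ (m+2) + (((m+2 : ℕ) : ℝ) - 1) * (r s / s) ^ (m+2)))
        ((κ / (m+2 : ℕ)) * (((m+2 : ℕ) : ℝ) * r' R ^ (m+1) * r'' R +
          (((m+2 : ℕ) : ℝ) - 1) * (((m+2 : ℕ) : ℝ) * (r R / R) ^ (m+1) * v'))) R := by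
      have := ((hdr'.pow (m+2)).add ((hdv.pow (m+2)).const_mul (((m+2 : ℕ) : ℝ) - 1))).const_mul
        (κ / ((m+2 : ℕ) : ℝ))
      simpa [mul_comm, mul_assoc, mul_left_comm] using this
    exact h1.add hdh
  -- derivative of A(s) = s^(m+1) * Phi1
  have hdA : HasDerivAt (fun s => s ^ (m+1) * Phi1 (m+2) κ h' (r' s) (r s / s))
      ((((m+2 : ℕ) : ℝ) - 1) * R ^ m * Phi2 (m+2) κ h' (r' R) (r R / R)) R :=
    (hr.equil R hRmem).hasDerivAt hnhds
  -- G and its derivative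
  have hlin : HasDerivAt (fun s => (r s - s * r' s) / ((m+2 : ℕ) : ℝ))
      ((r' R - (1 * r' R + R * r'' R)) / ((m+2 : ℕ) : ℝ)) R :=
    (hdr.sub ((hasDerivAt_id R).mul hdr')).div_const _
  have hpow : HasDerivAt (fun s => s ^ (m+2) / ((m+2 : ℕ) : ℝ))
      ((((m+2 : ℕ) : ℝ) * R ^ (m+1)) / ((m+2 : ℕ) : ℝ)) R := by
    have := (hasDerivAt_pow (m+2) R).div_const ((m+2 : ℕ) : ℝ)
    simpa using this
  have hG := (hpow.mul hdΦ).add (hlin.mul hdA)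
  -- transfer to the target function
  have heq : (fun s => (s ^ (m+2) / ((m+2 : ℕ) : ℝ)) *
            (Phi (m+2) κ h (r' s) (r s / s) - r' s * Phi1 (m+2) κ h' (r' s) (r s / s)) +
          (r s) ^ (m+2) / ((m+2 : ℕ) : ℝ) * Tstress (m+2) κ h' (r' s) (r s / s))
      =ᶠ[nhds R] (fun s => s ^ (m+2) / ((m+2 : ℕ) : ℝ) * Phi (m+2) κ h (r' s) (r s / s) +
          (r s - s * r' s) / ((m+2 : ℕ) : ℝ) * (s ^ (m+1) * Phi1 (m+2) κ h' (r' s) (r s / s))) := by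
    have hmem : Set.Ioo (0:ℝ) 1 ∈ nhds R := isOpen_Ioo.mem_nhds ⟨hR0, hR1⟩
    filter_upwards [hmem] with s hs
    have hs0 : (0:ℝ) < s := hs.1
    have hrs : 0 < r s := hr.pos s ⟨hs.1, le_of_lt hs.2⟩
    simp only [Phi1, Tstress, div_pow]
    simp only [show m + 2 - 1 = m + 1 by omega]
    field_simp
    ring
  have hfinal := hG.congr_of_eventuallyEq heq
  convert hfinal using 1
  case e'_4 => rfl
  case e'_5 => rfl
  -- the algebraic identity for the derivative value
  simp only [Phi, Phi1, Phi2]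
  have hcast : ((m+2 : ℕ) : ℝ) = (m : ℝ) + 2 := by push_cast; ring
  simp only [show m + 2 - 1 = m + 1 by omega, show m + 2 - 2 = m by omega]
  push_cast
  rw [hv'def]
  field_simp [hv'def]
  ring

end
end

section
/- Let r ∈ C²((0,1]) ∩ C([0,1]) with r'(R) > 0 on (0,1] be a solution of the radial equilibrium equation with r(0) > 0 and with δ(R) = r'(R)(r(R)/R)^{n−1} bounded on (0,1]. Then the limits lim_{R→0⁺} ( T(r(R)) − (n−1)κ ln R ) and lim_{R→0⁺} ( T(r(R)) + (n−1)κ ln(r(R)/R) ) both exist and are finite; in particular T(r(R)) → −∞ as R → 0⁺. -/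
open Real MeasureTheory Filter Set
open scoped ENNReal NNReal

noncomputable section

lemma exists_lim_of_deriv_bound {f g : ℝ → ℝ} {B : ℝ}
    (hf : ∀ x ∈ Set.Ioc (0:ℝ) 1, HasDerivWithinAt f (g x) (Set.Ioc 0 1) x)
    (hb : ∀ x ∈ Set.Ioc (0:ℝ) 1, ‖g x‖ ≤ B) :
    ∃ L, Tendsto f (nhdsWithin 0 (Set.Ioi 0)) (nhds L) := by
  have hB : 0 ≤ B := le_trans (norm_nonneg _) (hb 1 ⟨one_pos, le_refl 1⟩)
  have hlip : LipschitzOnWith B.toNNReal f (Set.Ioc 0 1) :=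
    (convex_Ioc (0:ℝ) 1).lipschitzOnWith_of_nnnorm_hasDerivWithin_le hf
      (fun x hx => by
        rw [← NNReal.coe_le_coe, coe_nnnorm, Real.coe_toNNReal _ hB]; exact hb x hx)
  obtain ⟨F, hF, heq⟩ := hlip.extend_real
  exact ⟨F 0, ((hF.continuous.tendsto 0).mono_left nhdsWithin_le_nhds).congr'
    (by filter_upwards [Ioc_mem_nhdsGT one_pos] with x hx using (heq hx).symm)⟩

lemma alg1 (k : ℕ) (κ H q a R : ℝ) (hR : R ≠ 0) (ha : a ≠ 0) :
    κ * (q / (a / R)) ^ (k+1) + H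
    = (R^(k+1) * (κ * q^(k+1) + (a/R)^(k+1) * H)) / a^(k+1) := by
  rw [eq_div_iff (pow_ne_zero _ ha), div_div_eq_mul_div, div_pow, div_pow]
  field_simp
  ring

/-- for a cavitating solution, `T(r(R)) − (n−1)κ ln R` and
`T(r(R)) + (n−1)κ ln(r(R)/R)` have finite limits as `R → 0⁺`; in particular
`T(r(R)) → −∞`. -/
theorem stmt3 (n : ℕ) (hn : 2 ≤ n) (κ : ℝ) (hκ : 0 < κ)
    (h h' h'' : ℝ → ℝ) (hh : GoodH h h' h'')
    (r r' r'' : ℝ → ℝ) (hr : RadialSol n κ h' r r' r'')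
    (hcont : ContinuousOn r (Set.Icc 0 1)) (hcav : 0 < r 0)
    (hbdd : ∃ M : ℝ, ∀ R ∈ Set.Ioc (0:ℝ) 1, del n r r' R ≤ M) :
    (∃ L₁ : ℝ, Tendsto (fun R => Tstress n κ h' (r' R) (r R / R)
        - ((n:ℝ) - 1) * κ * Real.log R) (nhdsWithin 0 (Set.Ioi 0)) (nhds L₁)) ∧
    (∃ L₂ : ℝ, Tendsto (fun R => Tstress n κ h' (r' R) (r R / R)
        + ((n:ℝ) - 1) * κ * Real.log (r R / R)) (nhdsWithin 0 (Set.Ioi 0)) (nhds L₂)) ∧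
    Tendsto (fun R => Tstress n κ h' (r' R) (r R / R)) (nhdsWithin 0 (Set.Ioi 0)) atBot := by
  obtain ⟨M, hM⟩ := hbdd
  obtain ⟨k, rfl⟩ : ∃ k, n = k + 2 := ⟨n - 2, by omega⟩
  -- positive lower bound for r on [0,1]
  obtain ⟨z, hz, hzmin⟩ := isCompact_Icc.exists_isMinOn (Set.nonempty_Icc.2 zero_le_one) hcont
  set c0 : ℝ := r z with hc0def
  have hc0 : 0 < c0 := by
    rcases eq_or_lt_of_le hz.1 with hz0 | hz0
    · rw [hc0def, ← hz0]; exact hcav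
    · exact hr.pos z ⟨hz0, hz.2⟩
  have hlow : ∀ x ∈ Set.Ioc (0:ℝ) 1, c0 ≤ r x := fun x hx =>
    hzmin ⟨le_of_lt hx.1, hx.2⟩
  -- M is positive
  have hMpos : 0 < M := by
    have h1 : (0:ℝ) < 1 := one_pos
    have := hM 1 ⟨one_pos, le_refl 1⟩
    have hdel : 0 < del (k+2) r r' 1 :=
      mul_pos (hr.derivPos 1 ⟨one_pos, le_refl 1⟩)
        (pow_pos (div_pos (hr.pos 1 ⟨one_pos, le_refl 1⟩) one_pos) _)
    linarith
  set C : ℝ := M / c0 ^ (k+2) with hCdef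
  have hC : 0 < C := div_pos hMpos (pow_pos hc0 _)
  -- bound on w R = R r' R / r R
  have hw0 : ∀ R ∈ Set.Ioc (0:ℝ) 1, 0 ≤ R * r' R / r R := fun R hR =>
    div_nonneg (mul_nonneg hR.1.le (hr.derivPos R hR).le) (hr.pos R hR).le
  have hwle : ∀ R ∈ Set.Ioc (0:ℝ) 1, R * r' R / r R ≤ C * R := by
    intro R hR
    have hR0 : (0:ℝ) < R := hR.1
    have hr0 : 0 < r R := hr.pos R hR
    have h1 : r' R * (r R / R) ^ (k+1) ≤ M := by simpa [del] using hM R hR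
    have h2 : r' R ≤ M * R ^ (k+1) / (r R) ^ (k+1) := by
      rw [div_pow] at h1
      rw [le_div_iff₀ (by positivity)]
      calc r' R * r R ^ (k+1) = r' R * (r R ^ (k+1) / R ^ (k+1)) * R ^ (k+1) := by
            field_simp
        _ ≤ M * R ^ (k+1) := by
            apply mul_le_mul_of_nonneg_right h1 (by positivity)
    have hc0r : c0 ≤ r R := hlow R hR
    calc R * r' R / r R ≤ R * (M * R ^ (k+1) / (r R) ^ (k+1)) / r R := by gcongr
      _ = M * R ^ (k+2) / (r R) ^ (k+2) := by field_simp; ring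
      _ ≤ M * R ^ (k+2) / c0 ^ (k+2) := by gcongr
      _ ≤ M * R / c0 ^ (k+2) := by
          gcongr
          calc R ^ (k+2) ≤ R ^ 1 :=
                pow_le_pow_of_le_one hR0.le hR.2 (by omega)
            _ = R := pow_one R
      _ = C * R := by rw [hCdef]; ring
  have hwkey : ∀ R ∈ Set.Ioc (0:ℝ) 1, (R * r' R / r R) ^ (k+2) ≤ C ^ (k+2) * R := by
    intro R hR
    calc (R * r' R / r R) ^ (k+2) ≤ (C * R) ^ (k+2) :=
          pow_le_pow_left₀ (hw0 R hR) (hwle R hR) _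
      _ = C ^ (k+2) * R ^ (k+2) := mul_pow _ _ _
      _ ≤ C ^ (k+2) * R := by
          gcongr
          calc R ^ (k+2) ≤ R ^ 1 := pow_le_pow_of_le_one hR.1.le hR.2 (by omega)
            _ = R := pow_one R
  -- derivative of the stress
  have hT : ∀ R ∈ Set.Ioc (0:ℝ) 1,
      HasDerivWithinAt (fun s => Tstress (k+2) κ h' (r' s) (r s / s))
        (((k:ℝ)+1) * κ * (1 - (R * r' R / r R)^(k+2)) / R) (Set.Ioc 0 1) R := by
    intro R hR
    have hR0 : (0:ℝ) < R := hR.1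
    have hr0 : 0 < r R := hr.pos R hR
    have hS := hr.equil R hR
    have hpow := (hr.hasDeriv R hR).pow (k+1)
    have hq := hS.div hpow (pow_ne_zero _ hr0.ne')
    have heq : Set.EqOn (fun s => Tstress (k+2) κ h' (r' s) (r s / s))
        (fun s => (s ^ (k+2-1) * Phi1 (k+2) κ h' (r' s) (r s / s)) / (r s)^(k+1))
        (Set.Ioc 0 1) := by
      intro s hs
      have hs0 : s ≠ 0 := ne_of_gt hs.1
      have hrs : r s ≠ 0 := ne_of_gt (hr.pos s hs)
      show Tstress (k+2) κ h' (r' s) (r s / s) = _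
      simp only [Tstress, Phi1, show k+2-1 = k+1 from rfl]
      exact alg1 k κ (h' (r' s * (r s / s)^(k+1))) (r' s) (r s) s hs0 hrs
    have hfin := hq.congr heq (heq hR)
    refine hfin.congr_deriv ?_
    simp only [Phi1, Phi2, show k+2-1 = k+1 from rfl, show k+2-2 = k from rfl,
      show k+1-1 = k from rfl, Nat.cast_add, Nat.cast_one, Pi.pow_apply]
    have hR0' : R ≠ 0 := ne_of_gt hR0
    have hr0' : r R ≠ 0 := ne_of_gt hr0
    generalize h' (r' R * (r R / R)^(k+1)) = H
    simp only [div_pow]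
    field_simp
    ring
  -- first limit
  have hF1 : ∀ R ∈ Set.Ioc (0:ℝ) 1,
      HasDerivWithinAt
        (fun R => Tstress (k+2) κ h' (r' R) (r R / R)
          - (((k+2:ℕ):ℝ) - 1) * κ * Real.log R)
        (-(((k:ℝ)+1) * κ * (R * r' R / r R)^(k+2) / R)) (Set.Ioc 0 1) R := by
    intro R hR
    have hR0 : (0:ℝ) < R := hR.1
    have hR0' : R ≠ 0 := ne_of_gt hR0
    have hlog := (Real.hasDerivAt_log hR0').hasDerivWithinAt (s := Set.Ioc (0:ℝ) 1)
    have := (hT R hR).sub (hlog.const_mul ((((k+2:ℕ):ℝ) - 1) * κ))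
    refine this.congr_deriv ?_
    push_cast
    generalize R * r' R / r R = w
    field_simp
    ring
  have hB1 : ∀ R ∈ Set.Ioc (0:ℝ) 1,
      ‖-(((k:ℝ)+1) * κ * (R * r' R / r R)^(k+2) / R)‖ ≤ ((k:ℝ)+1) * κ * C^(k+2) := by
    intro R hR
    have hR0 : (0:ℝ) < R := hR.1
    have hwn : 0 ≤ (R * r' R / r R)^(k+2) := pow_nonneg (hw0 R hR) _
    rw [Real.norm_eq_abs, abs_neg, abs_of_nonneg (by positivity)]
    rw [div_le_iff₀ hR0]
    calc ((k:ℝ)+1) * κ * (R * r' R / r R)^(k+2)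
        ≤ ((k:ℝ)+1) * κ * (C^(k+2) * R) := by
          apply mul_le_mul_of_nonneg_left (hwkey R hR) (by positivity)
      _ = ((k:ℝ)+1) * κ * C^(k+2) * R := by ring
  obtain ⟨L₁, hL₁⟩ := exists_lim_of_deriv_bound hF1 hB1
  -- second limit
  have hF2 : ∀ R ∈ Set.Ioc (0:ℝ) 1,
      HasDerivWithinAt
        (fun R => Tstress (k+2) κ h' (r' R) (r R / R)
          + (((k+2:ℕ):ℝ) - 1) * κ * Real.log (r R / R))
        (((k:ℝ)+1) * κ * ((R * r' R / r R) - (R * r' R / r R)^(k+2)) / R)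
        (Set.Ioc 0 1) R := by
    intro R hR
    have hR0 : (0:ℝ) < R := hR.1
    have hR0' : R ≠ 0 := ne_of_gt hR0
    have hr0 : 0 < r R := hr.pos R hR
    have hr0' : r R ≠ 0 := ne_of_gt hr0
    have hdiv := (hr.hasDeriv R hR).div (hasDerivWithinAt_id R (Set.Ioc 0 1)) hR0'
    have hlog := hdiv.log (ne_of_gt (div_pos hr0 hR0))
    have := (hT R hR).add (hlog.const_mul ((((k+2:ℕ):ℝ) - 1) * κ))
    refine this.congr_deriv ?_
    push_cast
    simp only [id, Pi.div_apply]
    field_simp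
    ring
  have hB2 : ∀ R ∈ Set.Ioc (0:ℝ) 1,
      ‖((k:ℝ)+1) * κ * ((R * r' R / r R) - (R * r' R / r R)^(k+2)) / R‖
        ≤ ((k:ℝ)+1) * κ * (C + C^(k+2)) := by
    intro R hR
    have hR0 : (0:ℝ) < R := hR.1
    have hw0' := hw0 R hR
    have hwn : 0 ≤ (R * r' R / r R)^(k+2) := pow_nonneg hw0' _
    have habs : |(R * r' R / r R) - (R * r' R / r R)^(k+2)| ≤ C * R + C^(k+2) * R := by
      rw [abs_sub_le_iff]
      constructor
      · have := hwle R hR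
        nlinarith [hwkey R hR]
      · have := hwkey R hR
        nlinarith [hwle R hR]
    rw [Real.norm_eq_abs, abs_div, abs_of_pos hR0, abs_mul,
      abs_of_nonneg (show (0:ℝ) ≤ ((k:ℝ)+1) * κ by positivity)]
    rw [div_le_iff₀ hR0]
    calc ((k:ℝ)+1) * κ * |(R * r' R / r R) - (R * r' R / r R)^(k+2)|
        ≤ ((k:ℝ)+1) * κ * (C * R + C^(k+2) * R) := by
          apply mul_le_mul_of_nonneg_left habs (by positivity)
      _ = ((k:ℝ)+1) * κ * (C + C^(k+2)) * R := by ring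
  obtain ⟨L₂, hL₂⟩ := exists_lim_of_deriv_bound hF2 hB2
  refine ⟨⟨L₁, hL₁⟩, ⟨L₂, hL₂⟩, ?_⟩
  -- T → −∞
  have hpos1 : (0:ℝ) < (((k+2:ℕ):ℝ) - 1) * κ := by
    have : (0:ℝ) ≤ (k:ℝ) := Nat.cast_nonneg k
    push_cast
    nlinarith
  have hlogB : Tendsto (fun R : ℝ => (((k+2:ℕ):ℝ) - 1) * κ * Real.log R)
      (nhdsWithin 0 (Set.Ioi 0)) atBot := by
    have := (tendsto_const_mul_atBot_of_pos hpos1).mpr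
      Real.tendsto_log_nhdsGT_zero
    simpa [mul_assoc] using this
  have := hL₁.add_atBot hlogB
  exact this.congr (fun R => by ring)

end
end

section
/- Let r ∈ C²((0,1]) ∩ C([0,1]) with r'(R) > 0 on (0,1] be a solution of the radial equilibrium equation with r(0) > 0 and with δ(R) = r'(R)(r(R)/R)^{n−1} bounded on (0,1]. Then the determinant function satisfies δ(R) → 0⁺ as R → 0⁺. -/
open Real MeasureTheory Filter Set
open scoped ENNReal NNReal

noncomputable section

lemma amgm (m : ℕ) (q v : ℝ) (hq : 0 ≤ q) (hv : q < v) :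
    0 < v^(m+2) - ((m:ℝ)+2)*q^(m+1)*v + ((m:ℝ)+1)*q^(m+2) := by
  induction m with
  | zero =>
    push_cast
    nlinarith [sq_nonneg (v-q), sub_pos.2 hv]
  | succ m ih =>
    have hv0 : 0 < v := lt_of_le_of_lt hq hv
    have hid : v^(m+1+2) - ((m:ℝ)+1+2)*q^(m+1+1)*v + ((m:ℝ)+1+1)*q^(m+1+2)
        = v*(v^(m+2) - ((m:ℝ)+2)*q^(m+1)*v + ((m:ℝ)+1)*q^(m+2))
          + ((m:ℝ)+2)*q^(m+1)*(v-q)^2 := by push_cast; ring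
    push_cast
    nlinarith [mul_pos hv0 ih, mul_nonneg (mul_nonneg (by positivity : (0:ℝ) ≤ (m:ℝ)+2) (pow_nonneg hq (m+1))) (sq_nonneg (v-q))]

lemma key_alg (m : ℕ) (κ Q V R e u P1 P2 : ℝ) (hQ : 0 < Q) (hQV : Q < V) (hR : 0 < R)
    (hκ : 0 < κ) (hP2 : 0 < P2) (hu : u * R = Q - V)
    (heq : ((m:ℝ)+1)*R^m*(κ*Q^(m+1) + V^(m+1)*P1)
       + R^(m+1)*(κ*(((m:ℝ)+1)*Q^m*e) + ((((m:ℝ)+1)*V^m*u)*P1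
          + V^(m+1)*(P2*(e*V^(m+1) + Q*(((m:ℝ)+1)*V^m*u)))))
       = ((m:ℝ)+1)*R^m*(κ*V^(m+1) + Q*V^m*P1)) :
    0 < e*V^(m+1) + Q*(((m:ℝ)+1)*V^m*u) := by
  have hV : 0 < V := hQ.trans hQV
  have hkey : (e*V^(m+1) + Q*(((m:ℝ)+1)*V^m*u))
        * ((κ*((m:ℝ)+1)*Q^m + V^(2*m+2)*P2) * R^(m+2))
      = ((m:ℝ)+1)*κ*R^(m+1)*V^m*(V^(m+2) - ((m:ℝ)+2)*Q^(m+1)*V + ((m:ℝ)+1)*Q^(m+2)) := by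
    linear_combination (V^(m+1)*R) * heq
      + (R^(m+1)*(κ*((m:ℝ)+1)^2*Q^(m+1)*V^m - ((m:ℝ)+1)*V^(2*m+1)*P1)) * hu
  have hpos : 0 < ((m:ℝ)+1)*κ*R^(m+1)*V^m*(V^(m+2) - ((m:ℝ)+2)*Q^(m+1)*V + ((m:ℝ)+1)*Q^(m+2)) := by
    have := amgm m Q V hQ.le hQV
    positivity
  have hA : 0 < (κ*((m:ℝ)+1)*Q^m + V^(2*m+2)*P2) * R^(m+2) := by positivity
  by_contra hc
  push_neg at hc
  nlinarith [mul_nonpos_of_nonpos_of_nonneg hc hA.le]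

lemma del_deriv (m : ℕ) (κ : ℝ) (hκ : 0 < κ) (h h' h'' : ℝ → ℝ) (hh : GoodH h h' h'')
    (r r' r'' : ℝ → ℝ) (hr : RadialSol (m+2) κ h' r r' r'')
    (R : ℝ) (hR0 : 0 < R) (hR1 : R < 1)
    (hQV : r' R < r R / R) :
    ∃ D : ℝ, 0 < D ∧ HasDerivAt (fun t => r' t * (r t / t)^(m+1)) D R := by
  have hRs : R ∈ Set.Ioc (0:ℝ) 1 := ⟨hR0, hR1.le⟩
  have hmem : Set.Ioc (0:ℝ) 1 ∈ nhds R := Ioc_mem_nhds hR0 hR1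
  have hQ : 0 < r' R := hr.derivPos R hRs
  have hrp : 0 < r R := hr.pos R hRs
  have hV : 0 < r R / R := div_pos hrp hR0
  have hD0 : 0 < r' R * (r R / R)^(m+1) := by positivity
  have hrd := hr.hasDeriv R hRs
  have hrd2 := hr.hasDeriv2 R hRs
  have hid : HasDerivWithinAt (fun t : ℝ => t) 1 (Set.Ioc 0 1) R := hasDerivWithinAt_id R _
  have hvd : HasDerivWithinAt (fun t => r t / t) ((r' R * R - r R * 1)/R^2) (Set.Ioc 0 1) R :=
    hrd.div hid hR0.ne'
  set u : ℝ := (r' R * R - r R * 1)/R^2 with hu_def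
  have hu : u * R = r' R - r R / R := by
    rw [hu_def]
    field_simp
  have hpowv : HasDerivWithinAt (fun t => (r t / t)^(m+1))
      (((m+1 : ℕ) : ℝ) * (r R / R)^m * u) (Set.Ioc 0 1) R := by
    simpa using hvd.fun_pow (m+1)
  have hι : HasDerivWithinAt (fun t => r' t * (r t / t)^(m+1))
      (r'' R * (r R / R)^(m+1) + r' R * (((m+1 : ℕ) : ℝ) * (r R / R)^m * u)) (Set.Ioc 0 1) R :=
    hrd2.mul hpowv
  have hh2 : HasDerivAt h' (h'' (r' R * (r R / R)^(m+1))) (r' R * (r R / R)^(m+1)) :=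
    hh.deriv2 _ hD0
  have hcomp : HasDerivWithinAt (fun t => h' (r' t * (r t / t)^(m+1)))
      (h'' (r' R * (r R / R)^(m+1)) *
        (r'' R * (r R / R)^(m+1) + r' R * (((m+1 : ℕ) : ℝ) * (r R / R)^m * u)))
      (Set.Ioc 0 1) R := by
    simpa [Function.comp_def] using hh2.comp_hasDerivWithinAt R hι
  have hmul2 := hpowv.mul hcomp
  have hconst : HasDerivWithinAt (fun t => κ * (r' t)^(m+1))
      (κ * (((m+1 : ℕ) : ℝ) * (r' R)^m * r'' R)) (Set.Ioc 0 1) R := by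
    simpa using (hrd2.pow (m+1)).const_mul κ
  have hPhi1 := hconst.add hmul2
  have hpowt : HasDerivWithinAt (fun t : ℝ => t^(m+1)) (((m+1 : ℕ) : ℝ) * R^m) (Set.Ioc 0 1) R := by
    simpa using hasDerivWithinAt_pow (m+1) R (s := Set.Ioc (0:ℝ) 1)
  have hF := hpowt.mul hPhi1
  have hFeq := hr.equil R hRs
  simp only [Phi1, Phi2, show m+2-1 = m+1 from rfl, show m+2-2 = m from rfl] at hFeq
  have heq := (hF.hasDerivAt hmem).unique (hFeq.hasDerivAt hmem)
  simp only [Pi.add_apply, Pi.mul_apply] at heq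
  push_cast at heq
  refine ⟨_, ?_, hι.hasDerivAt hmem⟩
  have hkey := key_alg m κ (r' R) (r R / R) R (r'' R) u
      (h' (r' R * (r R / R)^(m+1))) (h'' (r' R * (r R / R)^(m+1)))
      hQ hQV hR0 hκ (hh.hpp_pos _ hD0) hu (by linear_combination heq)
  push_cast
  linarith [hkey]

open scoped Topology

set_option maxHeartbeats 2000000 in
/-- for a cavitating solution the determinant function satisfies
`δ(R) → 0⁺` as `R → 0⁺`. -/
theorem stmt4 (n : ℕ) (hn : 2 ≤ n) (κ : ℝ) (hκ : 0 < κ)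
    (h h' h'' : ℝ → ℝ) (hh : GoodH h h' h'')
    (r r' r'' : ℝ → ℝ) (hr : RadialSol n κ h' r r' r'')
    (hcont : ContinuousOn r (Set.Icc 0 1)) (hcav : 0 < r 0)
    (hbdd : ∃ M : ℝ, ∀ R ∈ Set.Ioc (0:ℝ) 1, del n r r' R ≤ M) :
    Tendsto (fun R => del n r r' R) (nhdsWithin 0 (Set.Ioi 0)) (nhds 0) ∧
    ∀ R ∈ Set.Ioc (0:ℝ) 1, 0 < del n r r' R := by
  obtain ⟨m, rfl⟩ : ∃ m, n = m + 2 := ⟨n - 2, by omega⟩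
  obtain ⟨M, hM⟩ := hbdd
  have hdel_eq : ∀ R, del (m+2) r r' R = r' R * (r R / R)^(m+1) := fun R => rfl
  have hpos : ∀ R ∈ Set.Ioc (0:ℝ) 1, 0 < del (m+2) r r' R := by
    intro R hR
    have h1 := hr.derivPos R hR
    have h2 := hr.pos R hR
    have h3 : 0 < r R / R := div_pos h2 hR.1
    rw [hdel_eq]
    positivity
  refine ⟨?_, hpos⟩
  have hM0 : 0 < M := lt_of_lt_of_le (hpos 1 ⟨one_pos, le_refl 1⟩) (hM 1 ⟨one_pos, le_refl 1⟩)
  have hrt : Tendsto r (𝓝[>] (0:ℝ)) (nhds (r 0)) := by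
    have h1 : ContinuousWithinAt r (Set.Icc 0 1) 0 := hcont 0 ⟨le_refl 0, zero_le_one⟩
    have h2 : Tendsto r (𝓝[Set.Ioc (0:ℝ) 1] 0) (nhds (r 0)) :=
      h1.tendsto.mono_left (nhdsWithin_mono 0 Set.Ioc_subset_Icc_self)
    rwa [nhdsWithin_Ioc_eq_nhdsGT one_pos] at h2
  have hev : ∀ᶠ R in 𝓝[>] (0:ℝ), r 0 / 2 < r R :=
    hrt.eventually (eventually_gt_nhds (by linarith))
  obtain ⟨R₁', hR₁'pos, hR₁'⟩ : ∃ a, 0 < a ∧ ∀ R ∈ Set.Ioc (0:ℝ) a, r 0 / 2 < r R := by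
    rw [eventually_iff, mem_nhdsGT_iff_exists_Ioc_subset] at hev
    obtain ⟨u, hu, hsub⟩ := hev
    exact ⟨u, hu, fun R hR => hsub hR⟩
  set R₁ : ℝ := min R₁' (min (1/2) (r 0 / (2 * (M+2)))) with hR₁def
  have hR₁pos : 0 < R₁ := lt_min hR₁'pos (lt_min (by norm_num) (by positivity))
  have hR₁lt1 : R₁ < 1 :=
    lt_of_le_of_lt ((min_le_right _ _).trans (min_le_left _ _)) (by norm_num)
  have hfacts : ∀ R ∈ Set.Ioc (0:ℝ) R₁,
      0 < R ∧ R < 1 ∧ r 0 / 2 < r R ∧ M + 2 ≤ r R / R ∧ r' R < r R / R := by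
    rintro R ⟨h0, hle⟩
    have hRlt1 : R < 1 := lt_of_le_of_lt hle hR₁lt1
    have hr2 : r 0 / 2 < r R := hR₁' R ⟨h0, hle.trans (min_le_left _ _)⟩
    have hRle : R ≤ r 0 / (2*(M+2)) := hle.trans ((min_le_right _ _).trans (min_le_right _ _))
    have hVge : M + 2 ≤ r R / R := by
      rw [le_div_iff₀ h0]
      rw [le_div_iff₀ (by positivity : (0:ℝ) < 2*(M+2))] at hRle
      nlinarith [hM0]
    have hRs : R ∈ Set.Ioc (0:ℝ) 1 := ⟨h0, hRlt1.le⟩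
    have hQpos := hr.derivPos R hRs
    have hVpos : 0 < r R / R := div_pos (hr.pos R hRs) h0
    have hδM : r' R * (r R / R)^(m+1) ≤ M := by rw [← hdel_eq]; exact hM R hRs
    have hV1 : (1:ℝ) ≤ r R / R := by linarith
    have hQlt : r' R < r R / R := by
      have hpow : r R / R ≤ (r R / R)^(m+1) := le_self_pow₀ hV1 (by omega)
      nlinarith [hδM, hVpos, hV1, hVge, hQpos]
    exact ⟨h0, hRlt1, hr2, hVge, hQlt⟩
  have hderiv : ∀ x ∈ Set.Ioo (0:ℝ) R₁,
      ∃ D : ℝ, 0 < D ∧ HasDerivAt (fun t => r' t * (r t / t)^(m+1)) D x := by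
    intro x hx
    obtain ⟨h0, h1', _, _, h4⟩ := hfacts x ⟨hx.1, hx.2.le⟩
    exact del_deriv m κ hκ h h' h'' hh r r' r'' hr x h0 h1' h4
  have hmono : MonotoneOn (fun R => r' R * (r R / R)^(m+1)) (Set.Ioo 0 R₁) := by
    apply monotoneOn_of_deriv_nonneg (convex_Ioo _ _)
    · intro x hx
      obtain ⟨D, _, hD⟩ := hderiv x hx
      exact hD.continuousAt.continuousWithinAt
    · rw [interior_Ioo]
      intro x hx
      obtain ⟨D, _, hD⟩ := hderiv x hx
      exact hD.differentiableAt.differentiableWithinAt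
    · rw [interior_Ioo]
      intro x hx
      obtain ⟨D, hDpos, hD⟩ := hderiv x hx
      rw [hD.deriv]
      exact hDpos.le
  have hne : (Set.Ioo (0:ℝ) R₁).Nonempty := ⟨R₁/2, by constructor <;> [positivity; linarith]⟩
  have hbddb : BddBelow ((fun R => r' R * (r R / R)^(m+1)) '' Set.Ioo 0 R₁) := by
    refine ⟨0, ?_⟩
    rintro y ⟨x, hx, rfl⟩
    have := hpos x ⟨hx.1, (hx.2.trans hR₁lt1).le⟩
    rw [hdel_eq] at this
    exact this.le
  set L := sInf ((fun R => r' R * (r R / R)^(m+1)) '' Set.Ioo 0 R₁) with hLdef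
  have htendL : Tendsto (fun R => r' R * (r R / R)^(m+1)) (𝓝[>] (0:ℝ)) (nhds L) :=
    MonotoneOn.tendsto_nhdsWithin_Ioo_right hne hmono hbddb
  have hL0 : 0 ≤ L := by
    refine le_csInf (hne.image _) ?_
    rintro y ⟨x, hx, rfl⟩
    have := hpos x ⟨hx.1, (hx.2.trans hR₁lt1).le⟩
    rw [hdel_eq] at this
    exact this.le
  rcases hL0.eq_or_lt with hL | hL
  · exact hL ▸ htendL
  exfalso
  have hh'mono : MonotoneOn h' (Set.Ioi (0:ℝ)) := by
    apply StrictMonoOn.monotoneOn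
    apply strictMonoOn_of_deriv_pos (convex_Ioi _)
    · intro x hx
      exact (hh.deriv2 x hx).continuousAt.continuousWithinAt
    · rw [interior_Ioi]
      intro x hx
      rw [(hh.deriv2 x hx).deriv]
      exact hh.hpp_pos x hx
  have hLM : L ≤ M := by
    obtain ⟨x, hx⟩ := hne
    refine (csInf_le hbddb (Set.mem_image_of_mem _ hx)).trans ?_
    rw [← hdel_eq]
    exact hM x ⟨hx.1, (hx.2.trans hR₁lt1).le⟩
  set B : ℝ := |h' L| + |h' M| + 1 with hBdef
  have hB0 : 0 < B := by positivity
  have hP1bnd : ∀ d : ℝ, L ≤ d → d ≤ M → -B ≤ h' d ∧ h' d ≤ B := by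
    intro d h1 h2
    have hd0 : 0 < d := lt_of_lt_of_le hL h1
    have hlow : h' L ≤ h' d := hh'mono hL hd0 h1
    have hhigh : h' d ≤ h' M := hh'mono hd0 (lt_of_lt_of_le hL hLM) h2
    constructor
    · have := neg_abs_le (h' L); simp only [hBdef]; linarith [abs_nonneg (h' M)]
    · have := le_abs_self (h' M); simp only [hBdef]; linarith [abs_nonneg (h' L)]
  obtain ⟨K, hK⟩ := isCompact_Icc.exists_bound_of_continuousOn hcont
  have hK0 : 0 < K := lt_of_lt_of_le hcav ((le_abs_self _).trans (hK 0 ⟨le_refl 0, zero_le_one⟩))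
  set V₁ : ℝ := max (M+2) (2*M*B/κ + 1) with hV₁def
  have hV₁0 : 0 < V₁ := lt_of_lt_of_le (by linarith) (le_max_left _ _)
  have hV₁1 : (1:ℝ) ≤ V₁ := le_trans (by linarith) (le_max_left _ _)
  set R₂ : ℝ := min (R₁/2) (r 0 / (2*V₁)) with hR₂def
  have hR₂pos : 0 < R₂ := lt_min (by linarith) (by positivity)
  have hR₂R₁ : R₂ < R₁ := lt_of_le_of_lt (min_le_left _ _) (by linarith)
  have hR₂lt1 : R₂ < 1 := hR₂R₁.trans hR₁lt1
  have hbounds : ∀ R ∈ Set.Ioc (0:ℝ) R₂,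
      V₁ ≤ r R / R ∧ L ≤ r' R * (r R / R)^(m+1) ∧ r' R * (r R / R)^(m+1) ≤ M := by
    rintro R ⟨h0, hle⟩
    have hmemR₁ : R ∈ Set.Ioc (0:ℝ) R₁ := ⟨h0, hle.trans hR₂R₁.le⟩
    obtain ⟨_, hRlt1, hr2, hVge, _⟩ := hfacts R hmemR₁
    have hRle : R ≤ r 0 / (2*V₁) := hle.trans (min_le_right _ _)
    have hV₁le : V₁ ≤ r R / R := by
      rw [le_div_iff₀ h0]
      rw [le_div_iff₀ (by positivity : (0:ℝ) < 2*V₁)] at hRle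
      nlinarith [hV₁0]
    have hmemIoo : R ∈ Set.Ioo (0:ℝ) R₁ := ⟨h0, lt_of_le_of_lt hle hR₂R₁⟩
    have hLle : L ≤ r' R * (r R / R)^(m+1) := csInf_le hbddb (Set.mem_image_of_mem _ hmemIoo)
    have hMge : r' R * (r R / R)^(m+1) ≤ M := by
      rw [← hdel_eq]; exact hM R ⟨h0, hRlt1.le⟩
    exact ⟨hV₁le, hLle, hMge⟩
  set c : ℝ := ((m:ℝ)+1) * (κ/2) * (r 0 / 2)^(m+1) with hcdef
  have hc0 : 0 < c := by positivity
  set F : ℝ → ℝ := fun t => t^(m+1) * Phi1 (m+2) κ h' (r' t) (r t / t) with hFdef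
  set G : ℝ → ℝ := fun t => F t - c * Real.log t with hGdef
  have hFderiv : ∀ x ∈ Set.Ioo (0:ℝ) R₂,
      HasDerivAt F ((((m+2 : ℕ) : ℝ) - 1) * x ^ m * Phi2 (m+2) κ h' (r' x) (r x / x)) x := by
    intro x hx
    have hxs : x ∈ Set.Ioc (0:ℝ) 1 := ⟨hx.1, (hx.2.trans hR₂lt1).le⟩
    exact (hr.equil x hxs).hasDerivAt (Ioc_mem_nhds hx.1 (hx.2.trans hR₂lt1))
  have hPhi2low : ∀ x ∈ Set.Ioo (0:ℝ) R₂,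
      (κ/2) * (r x / x)^(m+1) ≤ Phi2 (m+2) κ h' (r' x) (r x / x) := by
    intro x hx
    obtain ⟨hV₁le, hLd, hMd⟩ := hbounds x ⟨hx.1, hx.2.le⟩
    have hxs : x ∈ Set.Ioc (0:ℝ) 1 := ⟨hx.1, (hx.2.trans hR₂lt1).le⟩
    have hQpos := hr.derivPos x hxs
    have hVpos : 0 < r x / x := div_pos (hr.pos x hxs) hx.1
    have hP1 := hP1bnd _ hLd hMd
    simp only [Phi2, show m+2-1 = m+1 from rfl, show m+2-2 = m from rfl]
    have hV1 : (1:ℝ) ≤ r x / x := le_trans hV₁1 hV₁le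
    have hVbig : 2*M*B/κ + 1 ≤ r x / x := le_trans (le_max_right _ _) hV₁le
    have hMB : 2*M*B ≤ κ * (r x / x) := by
      have h5 : 2*M*B/κ ≤ r x / x := by linarith
      rw [div_le_iff₀ hκ] at h5
      nlinarith [hV1, hκ]
    have hpow1 : r x / x ≤ (r x / x)^(m+1) := le_self_pow₀ hV1 (by omega)
    have hWpos : 0 < (r x / x)^m := pow_pos hVpos m
    have key : r' x * (r x / x)^m * B * (r x / x) ≤ (κ/2) * (r x / x)^(m+1) * (r x / x) := by
      have e1 : r' x * (r x / x)^m * B * (r x / x) = r' x * (r x / x)^(m+1) * B := by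
        rw [pow_succ]; ring
      have e2 : r' x * (r x / x)^(m+1) * B ≤ M * B := by nlinarith [hMd, hB0]
      have e3 : M * B ≤ (κ/2) * (r x / x) * (r x / x) := by
        nlinarith [mul_le_mul_of_nonneg_right hMB hVpos.le,
          mul_le_mul_of_nonneg_left hV1 (mul_pos hM0 hB0).le]
      have e4 : (κ/2) * (r x / x) * (r x / x) ≤ (κ/2) * (r x / x)^(m+1) * (r x / x) := by
        nlinarith [mul_le_mul_of_nonneg_left hpow1 (by positivity : (0:ℝ) ≤ κ/2 * (r x / x))]
      linarith [e1.le, e1.ge]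
    have key2 : r' x * (r x / x)^m * B ≤ (κ/2) * (r x / x)^(m+1) :=
      le_of_mul_le_mul_right key hVpos
    have h5 : r' x * (r x / x)^m * (-B) ≤ r' x * (r x / x)^m * h' (r' x * (r x / x)^(m+1)) :=
      mul_le_mul_of_nonneg_left hP1.1 (by positivity)
    nlinarith [key2, h5]
  have hGmono : MonotoneOn G (Set.Ioc 0 R₂) := by
    apply monotoneOn_of_deriv_nonneg (convex_Ioc _ _)
    · intro x hx
      have hxs : x ∈ Set.Ioc (0:ℝ) 1 := ⟨hx.1, hx.2.trans hR₂lt1.le⟩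
      have hFc : ContinuousWithinAt F (Set.Ioc 0 R₂) x :=
        (hr.equil x hxs).continuousWithinAt.mono (Set.Ioc_subset_Ioc_right hR₂lt1.le)
      exact hFc.sub ((continuousAt_const.mul (Real.continuousAt_log hx.1.ne')).continuousWithinAt)
    · rw [interior_Ioc]
      intro x hx
      exact ((hFderiv x hx).sub ((Real.hasDerivAt_log hx.1.ne').const_mul c)).differentiableAt.differentiableWithinAt
    · rw [interior_Ioc]
      intro x hx
      have hd := (hFderiv x hx).sub ((Real.hasDerivAt_log hx.1.ne').const_mul c)
      rw [show G = F - fun y => c * Real.log y from rfl, hd.deriv]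
      have hxpos := hx.1
      have hr2 : r 0 / 2 < r x := (hfacts x ⟨hxpos, hx.2.le.trans hR₂R₁.le⟩).2.2.1
      have hP2 := hPhi2low x hx
      have hcast : ((m+2:ℕ):ℝ) - 1 = (m:ℝ)+1 := by push_cast; ring
      have hstep : c / x ≤ ((m:ℝ)+1) * x^m * ((κ/2) * (r x/x)^(m+1)) := by
        rw [div_le_iff₀ hxpos]
        have e1 : ((m:ℝ)+1) * x^m * ((κ/2)*(r x/x)^(m+1)) * x = ((m:ℝ)+1)*(κ/2)*(r x)^(m+1) := by
          rw [div_pow, pow_succ x m]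
          field_simp
        rw [e1, hcdef]
        have e2 : (r 0 / 2)^(m+1) ≤ (r x)^(m+1) := pow_le_pow_left₀ (by positivity) hr2.le _
        nlinarith [mul_le_mul_of_nonneg_left e2 (by positivity : (0:ℝ) ≤ ((m:ℝ)+1)*(κ/2))]
      have hmulle : ((m:ℝ)+1) * x^m * ((κ/2) * (r x/x)^(m+1))
          ≤ ((m:ℝ)+1) * x^m * Phi2 (m+2) κ h' (r' x) (r x / x) := by
        apply mul_le_mul_of_nonneg_left hP2 (by positivity)
      have hfin : c * x⁻¹ ≤ (((m+2:ℕ):ℝ) - 1) * x^m * Phi2 (m+2) κ h' (r' x) (r x / x) := by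
        rw [hcast]
        calc c * x⁻¹ = c / x := by rw [div_eq_mul_inv]
        _ ≤ ((m:ℝ)+1) * x^m * ((κ/2) * (r x/x)^(m+1)) := hstep
        _ ≤ _ := hmulle
      linarith
  have hFlow : ∀ t ∈ Set.Ioc (0:ℝ) R₂, -(K^(m+1) * B) ≤ F t := by
    rintro t ⟨h0, hle⟩
    have hts : t ∈ Set.Ioc (0:ℝ) 1 := ⟨h0, hle.trans hR₂lt1.le⟩
    obtain ⟨_, hLd, hMd⟩ := hbounds t ⟨h0, hle⟩
    have hP1 := hP1bnd _ hLd hMd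
    have hQpos := hr.derivPos t hts
    have hrpos := hr.pos t hts
    have hrK : r t ≤ K := (le_abs_self _).trans (hK t ⟨h0.le, hts.2⟩)
    simp only [hFdef, Phi1, show m+2-1 = m+1 from rfl]
    have h1 : t^(m+1) * (r t / t)^(m+1) = (r t)^(m+1) := by
      rw [← mul_pow, mul_div_cancel₀ _ h0.ne']
    have hexp : t^(m+1) * (κ*(r' t)^(m+1) + (r t/t)^(m+1) * h' (r' t*(r t/t)^(m+1)))
        = κ*(t^(m+1)*(r' t)^(m+1)) + (r t)^(m+1) * h' (r' t*(r t/t)^(m+1)) := by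
      rw [← h1]; ring
    rw [hexp]
    have h2 : (r t)^(m+1) * (-B) ≤ (r t)^(m+1) * h' (r' t*(r t/t)^(m+1)) :=
      mul_le_mul_of_nonneg_left hP1.1 (by positivity)
    have h3 : (r t)^(m+1) ≤ K^(m+1) := pow_le_pow_left₀ hrpos.le hrK _
    nlinarith [mul_pos (pow_pos h0 (m+1)) (pow_pos hQpos (m+1)), hκ, hB0]
  set X : ℝ := (-(K^(m+1)*B) - G R₂ - 1)/c with hXdef
  set s₀ : ℝ := min R₂ (Real.exp X) with hs₀def
  have hs₀pos : 0 < s₀ := lt_min hR₂pos (Real.exp_pos X)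
  have hs₀mem : s₀ ∈ Set.Ioc (0:ℝ) R₂ := ⟨hs₀pos, min_le_left _ _⟩
  have hGle : G s₀ ≤ G R₂ := hGmono hs₀mem ⟨hR₂pos, le_refl _⟩ (min_le_left _ _)
  have hlog : Real.log s₀ ≤ X :=
    le_trans (Real.log_le_log hs₀pos (min_le_right _ _)) (le_of_eq (Real.log_exp X))
  have hFs₀ : F s₀ ≤ G R₂ + c * X := by
    have e1 : F s₀ = G s₀ + c * Real.log s₀ := by simp only [hGdef]; ring
    nlinarith [mul_le_mul_of_nonneg_left hlog hc0.le]
  have hcX : c * X = -(K^(m+1)*B) - G R₂ - 1 := by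
    rw [hXdef, mul_div_cancel₀ _ hc0.ne']
  have hlow := hFlow s₀ hs₀mem
  linarith

end
end

section
/- Assume in addition that there exist γ > 0, d₀ > 0 and constants 0 < K₁ ≤ K₂ such that K₁/d^{γ+2} ≤ h''(d) ≤ K₂/d^{γ+2} and K₁/d^{γ} ≤ h(d) ≤ K₂/d^{γ} for all 0 < d ≤ d₀. Let r ∈ C²((0,1]) ∩ C([0,1]) with r'(R) > 0 on (0,1] be a solution of the radial equilibrium equation with r(0) > 0 and δ bounded on (0,1]. Then the integral ∫₀¹ R^{n−1} h(δ(R)) dR is finite. -/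
open Real MeasureTheory Filter Set
open scoped ENNReal NNReal

noncomputable section

lemma aux_rpow_le_one_add (x p : ℝ) (hx : 0 ≤ x) (hp0 : 0 ≤ p) (hp1 : p ≤ 1) :
    x ^ p ≤ 1 + x := by
  rcases le_or_gt x 1 with hx1 | hx1
  · calc x ^ p ≤ 1 ^ p := Real.rpow_le_rpow hx hx1 hp0
    _ = 1 := Real.one_rpow p
    _ ≤ 1 + x := by linarith
  · calc x ^ p ≤ x ^ (1:ℝ) := Real.rpow_le_rpow_of_exponent_le hx1.le hp1
    _ = x := Real.rpow_one x
    _ ≤ 1 + x := by linarith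

lemma aux_Tstress_eq (k : ℕ) (κ : ℝ) (h' : ℝ → ℝ) (s q c : ℝ) (hs : s ≠ 0) (hc : c ≠ 0) :
    Tstress (k+2) κ h' q (c / s) = s ^ (k+2-1) * Phi1 (k+2) κ h' q (c/s) / c ^ (k+2-1) := by
  simp only [Tstress, Phi1, show k+2-1 = k+1 from rfl]
  have hcs : c / s ≠ 0 := div_ne_zero hc hs
  generalize h' (q * (c / s) ^ (k + 1)) = H
  rw [div_pow, div_pow, div_div_eq_mul_div]
  field_simp

lemma aux_key_ineq (k : ℕ) (κ R c q H : ℝ) (hκ : 0 < κ) (hR : 0 < R) (hc : 0 < c) (hq : 0 < q) :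
    ((((k:ℕ)+2:ℕ):ℝ) - 1) * R ^ k * (κ * (c/R)^(k+1) + q * (c/R)^k * H) * c^(k+1)
      - R^(k+1) * (κ * q^(k+1) + (c/R)^(k+1) * H) * ((((k:ℕ)+1:ℕ):ℝ) * c^k * q)
    ≤ ((((k:ℕ)+2:ℕ):ℝ) - 1) * κ / R * (c^(k+1))^2 := by
  have key : ((((k:ℕ)+2:ℕ):ℝ) - 1) * R ^ k * (κ * (c/R)^(k+1) + q * (c/R)^k * H) * c^(k+1)
      - R^(k+1) * (κ * q^(k+1) + (c/R)^(k+1) * H) * ((((k:ℕ)+1:ℕ):ℝ) * c^k * q)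
      = ((((k:ℕ)+2:ℕ):ℝ) - 1) * κ / R * (c^(k+1))^2
        - ((k:ℝ)+1) * κ * R^(k+1) * c^k * q^(k+2) := by
    push_cast
    rw [div_pow, div_pow]
    field_simp
    ring
  rw [key]
  have hpos : 0 < ((k:ℝ)+1) * κ * R^(k+1) * c^k * q^(k+2) := by positivity
  linarith
set_option maxHeartbeats 1000000 in
/-- under power-law bounds on `h''` and `h` near `0`, the integral
`∫₀¹ R^{n−1} h(δ(R)) dR` is finite for a cavitating solution. -/
theorem stmt5 (n : ℕ) (hn : 2 ≤ n) (κ : ℝ) (hκ : 0 < κ)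
    (h h' h'' : ℝ → ℝ) (hh : GoodH h h' h'')
    (r r' r'' : ℝ → ℝ) (hr : RadialSol n κ h' r r' r'')
    (γ d₀ K₁ K₂ : ℝ) (hγ : 0 < γ) (hd₀ : 0 < d₀) (hK₁ : 0 < K₁) (hK₁₂ : K₁ ≤ K₂)
    (hpp_bound : ∀ d : ℝ, 0 < d → d ≤ d₀ →
      K₁ / d ^ (γ + 2) ≤ h'' d ∧ h'' d ≤ K₂ / d ^ (γ + 2))
    (h_bound : ∀ d : ℝ, 0 < d → d ≤ d₀ → K₁ / d ^ γ ≤ h d ∧ h d ≤ K₂ / d ^ γ)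
    (hcont : ContinuousOn r (Set.Icc 0 1)) (hcav : 0 < r 0)
    (hbdd : ∃ M : ℝ, ∀ R ∈ Set.Ioc (0:ℝ) 1, del n r r' R ≤ M) :
    IntegrableOn (fun R => R ^ (n - 1) * h (del n r r' R)) (Set.Ioc 0 1) := by
  obtain ⟨k, rfl⟩ : ∃ k, n = k + 2 := ⟨n - 2, by omega⟩
  obtain ⟨M, hM⟩ := hbdd
  have hK₂ : 0 < K₂ := hK₁.trans_le hK₁₂
  have e1 : k + 2 - 1 = k + 1 := rfl
  have hone : (1:ℝ) ∈ Set.Ioc (0:ℝ) 1 := ⟨one_pos, le_refl 1⟩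
  -- continuity facts
  have hcr : ContinuousOn r (Set.Ioc 0 1) := fun R hR => (hr.hasDeriv R hR).continuousWithinAt
  have hcr' : ContinuousOn r' (Set.Ioc 0 1) := fun R hR => (hr.hasDeriv2 R hR).continuousWithinAt
  have hcv : ContinuousOn (fun s => r s / s) (Set.Ioc 0 1) :=
    hcr.div continuousOn_id (fun s hs => hs.1.ne')
  have hvpos : ∀ R ∈ Set.Ioc (0:ℝ) 1, 0 < r R / R := fun R hR => div_pos (hr.pos R hR) hR.1
  have hdel_eq : ∀ R, del (k+2) r r' R = r' R * (r R / R) ^ (k+1) := fun R => rfl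
  have hcdel : ContinuousOn (del (k+2) r r') (Set.Ioc 0 1) :=
    hcr'.mul (hcv.pow _)
  have hch' : ContinuousOn h' (Set.Ioi 0) :=
    fun d hd => ((hh.deriv2 d hd).continuousAt).continuousWithinAt
  have hch : ContinuousOn h (Set.Ioi 0) :=
    fun d hd => ((hh.deriv1 d hd).continuousAt).continuousWithinAt
  have hδpos : ∀ R ∈ Set.Ioc (0:ℝ) 1, 0 < del (k+2) r r' R := by
    intro R hR
    rw [hdel_eq]
    exact mul_pos (hr.derivPos R hR) (pow_pos (hvpos R hR) _)
  have hMpos : 0 < M := (hδpos 1 hone).trans_le (hM 1 hone)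
  -- monotonicity of r and lower bound for v
  have hrmono : MonotoneOn r (Set.Icc 0 1) := by
    apply monotoneOn_of_deriv_nonneg (convex_Icc 0 1) hcont
    · intro x hx
      rw [interior_Icc] at hx
      have hx' : x ∈ Set.Ioc (0:ℝ) 1 := ⟨hx.1, hx.2.le⟩
      exact (((hr.hasDeriv x hx').hasDerivAt
        (Ioc_mem_nhds hx.1 hx.2)).differentiableAt).differentiableWithinAt
    · intro x hx
      rw [interior_Icc] at hx
      have hx' : x ∈ Set.Ioc (0:ℝ) 1 := ⟨hx.1, hx.2.le⟩
      rw [((hr.hasDeriv x hx').hasDerivAt (Ioc_mem_nhds hx.1 hx.2)).deriv]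
      exact (hr.derivPos x hx').le
  have hvlb : ∀ R ∈ Set.Ioc (0:ℝ) 1, r 0 ≤ r R / R := by
    intro R hR
    have h0 : r 0 ≤ r R :=
      hrmono (left_mem_Icc.mpr zero_le_one) ⟨hR.1.le, hR.2⟩ hR.1.le
    rw [le_div_iff₀ hR.1]
    nlinarith [hR.2, hR.1, hcav]
  -- bound on (q/v)^(k+1)
  set C₀ : ℝ := (M / (r 0) ^ (k+2)) ^ (k+1) with hC₀def
  have hqvpow : ∀ R ∈ Set.Ioc (0:ℝ) 1, (r' R / (r R / R)) ^ (k+1) ≤ C₀ := by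
    intro R hR
    have hv := hvpos R hR
    have hq := hr.derivPos R hR
    have hvlb' := hvlb R hR
    have hqv : r' R / (r R / R) ≤ M / (r 0) ^ (k+2) := by
      rw [div_le_div_iff₀ hv (pow_pos hcav _)]
      have h1 : r' R * (r R / R) ^ (k+1) ≤ M := by
        have := hM R hR; rwa [hdel_eq] at this
      have h2 : (r 0) ^ (k+2) ≤ (r R / R) ^ (k+2) := pow_le_pow_left₀ hcav.le hvlb' _
      calc r' R * (r 0) ^ (k+2) ≤ r' R * (r R / R) ^ (k+2) := by
            exact mul_le_mul_of_nonneg_left h2 hq.le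
        _ = (r' R * (r R / R) ^ (k+1)) * (r R / R) := by ring
        _ ≤ M * (r R / R) := mul_le_mul_of_nonneg_right h1 hv.le
    exact pow_le_pow_left₀ (div_nonneg hq.le hv.le) hqv _
  -- the Cauchy stress function T
  set T : ℝ → ℝ := fun s => Tstress (k+2) κ h' (r' s) (r s / s) with hTdef
  -- g = T - (k+1) κ log is antitone on (0,1]
  have hgderiv : ∀ x ∈ Set.Ioo (0:ℝ) 1, ∃ d,
      HasDerivAt (fun s => T s - ((k:ℝ)+1) * κ * Real.log s) d x ∧ d ≤ 0 := by
    intro x hx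
    have hx1 : x ∈ Set.Ioc (0:ℝ) 1 := ⟨hx.1, hx.2.le⟩
    have hnb : Set.Ioc (0:ℝ) 1 ∈ nhds x := Ioc_mem_nhds hx.1 hx.2
    have hrx : 0 < r x := hr.pos x hx1
    have hqx : 0 < r' x := hr.derivPos x hx1
    have hP := (hr.equil x hx1).hasDerivAt hnb
    have hrd := (hr.hasDeriv x hx1).hasDerivAt hnb
    have hpow : HasDerivAt (fun s => (r s) ^ (k+1))
        ((((k+1:ℕ)):ℝ) * (r x) ^ (k+1-1) * r' x) x := hrd.pow (k+1)
    have hne : (r x) ^ (k+1) ≠ 0 := (pow_pos hrx _).ne'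
    have hdiv := hP.div hpow hne
    have hTev : T =ᶠ[nhds x] fun s =>
        (s ^ (k+2-1) * Phi1 (k+2) κ h' (r' s) (r s / s)) / (r s) ^ (k+1) := by
      filter_upwards [hnb] with s hs
      have := aux_Tstress_eq k κ h' s (r' s) (r s) hs.1.ne' (hr.pos s hs).ne'
      simpa [hTdef, e1] using this
    have hT := hdiv.congr_of_eventuallyEq hTev
    have hlog : HasDerivAt (fun s => ((k:ℝ)+1) * κ * Real.log s)
        (((k:ℝ)+1) * κ * x⁻¹) x := (Real.hasDerivAt_log hx.1.ne').const_mul _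
    have hnum := aux_key_ineq k κ x (r x) (r' x)
      (h' (r' x * (r x / x) ^ (k+1))) hκ hx.1 hrx hqx
    have hden : (0:ℝ) < ((r x) ^ (k+1)) ^ 2 := by positivity
    have hD : ((((k+2:ℕ):ℝ) - 1) * x ^ (k + 2 - 2) * Phi2 (k+2) κ h' (r' x) (r x / x) *
          (r x) ^ (k+1) -
          x ^ (k+2-1) * Phi1 (k+2) κ h' (r' x) (r x / x) *
          ((((k+1:ℕ)):ℝ) * (r x) ^ (k+1-1) * r' x)) / ((r x) ^ (k+1)) ^ 2
        ≤ (((k:ℝ)+1)) * κ * x⁻¹ := by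
      rw [div_le_iff₀ hden]
      have hcast : (((k:ℝ)+1)) * κ * x⁻¹ * ((r x) ^ (k+1)) ^ 2
          = (((k+2:ℕ):ℝ) - 1) * κ / x * ((r x) ^ (k+1)) ^ 2 := by
        push_cast; ring
      rw [hcast]
      have hexp : k + 2 - 2 = k := rfl
      simp only [Phi1, Phi2, e1, hexp, show k+1-1 = k from rfl] at hnum ⊢
      convert hnum using 2 <;> push_cast <;> ring
    refine ⟨((((k+2:ℕ):ℝ) - 1) * x ^ (k + 2 - 2) * Phi2 (k+2) κ h' (r' x) (r x / x) *
          (r x) ^ (k+1) -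
          x ^ (k+2-1) * Phi1 (k+2) κ h' (r' x) (r x / x) *
          ((((k+1:ℕ)):ℝ) * (r x) ^ (k+1-1) * r' x)) / ((r x) ^ (k+1)) ^ 2
          - ((k:ℝ)+1) * κ * x⁻¹, ?_, ?_⟩
    · exact hT.sub hlog
    · linarith [hD]
  have hg : AntitoneOn (fun s => T s - ((k:ℝ)+1) * κ * Real.log s) (Set.Ioc 0 1) := by
    apply antitoneOn_of_deriv_nonpos (convex_Ioc 0 1)
    · apply ContinuousOn.sub
      · simp only [hTdef, Tstress]
        apply ContinuousOn.add
        · exact continuousOn_const.mul ((hcr'.div hcv (fun s hs => (hvpos s hs).ne')).pow _)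
        · apply hch'.comp (hcr'.mul (hcv.pow _))
          intro s hs
          have := hδpos s hs
          rw [hdel_eq] at this
          simpa [e1] using this
      · exact continuousOn_const.mul (Real.continuousOn_log.mono (fun s hs => hs.1.ne'))
    · rw [interior_Ioc]
      intro x hx
      obtain ⟨d, hd, _⟩ := hgderiv x hx
      exact hd.differentiableAt.differentiableWithinAt
    · rw [interior_Ioc]
      intro x hx
      obtain ⟨d, hd, hd0⟩ := hgderiv x hx
      rw [hd.deriv]
      exact hd0
  have hTlb : ∀ R ∈ Set.Ioc (0:ℝ) 1, T 1 + ((k:ℝ)+1) * κ * Real.log R ≤ T R := by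
    intro R hR
    have := hg hR hone hR.2
    simp only [Real.log_one, mul_zero, sub_zero] at this
    linarith
  -- h' lower bound via T
  have hh'lb : ∀ R ∈ Set.Ioc (0:ℝ) 1,
      T 1 + ((k:ℝ)+1) * κ * Real.log R - κ * C₀ ≤ h' (del (k+2) r r' R) := by
    intro R hR
    have hTR : T R = κ * (r' R / (r R / R)) ^ (k+1) + h' (del (k+2) r r' R) := rfl
    have h1 := hTlb R hR
    have h2 := hqvpow R hR
    nlinarith [hκ]
  -- monotonicity of ψ = h' + (K₁/(γ+1)) s^(-(γ+1))
  set ψ : ℝ → ℝ := fun s => h' s + (K₁/(γ+1)) * s ^ (-(γ+1) : ℝ) with hψdef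
  have hψderiv : ∀ x ∈ Set.Ioo (0:ℝ) d₀, ∃ d, HasDerivAt ψ d x ∧ 0 ≤ d := by
    intro x hx
    have hx0 : 0 < x := hx.1
    have h1 : HasDerivAt (fun s : ℝ => s ^ (-(γ+1):ℝ))
        ((-(γ+1)) * x ^ ((-(γ+1))-1 : ℝ)) x := Real.hasDerivAt_rpow_const (Or.inl hx0.ne')
    refine ⟨_, (hh.deriv2 x hx0).add (h1.const_mul (K₁/(γ+1))), ?_⟩
    have hbd := (hpp_bound x hx0 hx.2.le).1
    have hexp : ((-(γ+1))-1 : ℝ) = -(γ+2) := by ring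
    have hxpow : x ^ (-(γ+2) : ℝ) = (x ^ ((γ+2) : ℝ))⁻¹ := by
      rw [← Real.rpow_neg hx0.le]
    have heq : K₁/(γ+1) * ((-(γ+1)) * x ^ ((-(γ+1))-1 : ℝ)) = -(K₁ / x ^ ((γ+2):ℝ)) := by
      rw [hexp, hxpow]
      field_simp
    rw [heq]
    linarith
  have hψmono : MonotoneOn ψ (Set.Ioc 0 d₀) := by
    apply monotoneOn_of_deriv_nonneg (convex_Ioc 0 d₀)
    · apply ContinuousOn.add (hch'.mono (fun s hs => hs.1))
      apply continuousOn_const.mul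
      exact fun s hs => (Real.continuousAt_rpow_const s _ (Or.inl hs.1.ne')).continuousWithinAt
    · rw [interior_Ioc]
      intro x hx
      obtain ⟨d, hd, _⟩ := hψderiv x hx
      exact hd.differentiableAt.differentiableWithinAt
    · rw [interior_Ioc]
      intro x hx
      obtain ⟨d, hd, hd0⟩ := hψderiv x hx
      rw [hd.deriv]
      exact hd0
  -- constants
  set A₁ : ℝ := ((γ+1)/K₁) * (ψ d₀ - T 1 + κ * C₀) with hA₁def
  set B₁ : ℝ := ((γ+1)/K₁) * (((k:ℝ)+1) * κ) with hB₁def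
  have hB₁ : 0 ≤ B₁ := by positivity
  -- pointwise bound when δ ≤ d₀
  have hsmall : ∀ R ∈ Set.Ioc (0:ℝ) 1, del (k+2) r r' R ≤ d₀ →
      h (del (k+2) r r' R) ≤ K₂*(1+A₁) + K₂*B₁*(-Real.log R) := by
    intro R hR hle
    set δR := del (k+2) r r' R with hδRdef
    have hδ : 0 < δR := hδpos R hR
    set X : ℝ := δR ^ (-(γ+1) : ℝ) with hXdef
    have hXnn : 0 ≤ X := Real.rpow_nonneg hδ.le _
    have h1 : ψ δR ≤ ψ d₀ := hψmono ⟨hδ, hle⟩ (right_mem_Ioc.mpr hd₀) hle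
    have h2 := hh'lb R hR
    have h3 : K₁/(γ+1) * X ≤ ψ d₀ - T 1 + κ * C₀ - ((k:ℝ)+1) * κ * Real.log R := by
      simp only [hψdef] at h1
      linarith
    have h4 : X ≤ A₁ + B₁ * (-Real.log R) := by
      have hpos : (0:ℝ) < (γ+1)/K₁ := by positivity
      have h5 : X = ((γ+1)/K₁) * (K₁/(γ+1) * X) := by
        field_simp
      calc X = ((γ+1)/K₁) * (K₁/(γ+1) * X) := h5
        _ ≤ ((γ+1)/K₁) * (ψ d₀ - T 1 + κ * C₀ - ((k:ℝ)+1) * κ * Real.log R) :=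
            mul_le_mul_of_nonneg_left h3 hpos.le
        _ = A₁ + B₁ * (-Real.log R) := by rw [hA₁def, hB₁def]; ring
    have hpow2 : δR ^ (-γ : ℝ) = X ^ (γ/(γ+1) : ℝ) := by
      rw [hXdef, ← Real.rpow_mul hδ.le]
      congr 1
      field_simp
    have h6 : δR ^ (-γ : ℝ) ≤ 1 + X := by
      rw [hpow2]
      apply aux_rpow_le_one_add X _ hXnn (by positivity)
      rw [div_le_one (by linarith)]
      linarith
    have h7 : h δR ≤ K₂ * δR ^ (-γ : ℝ) := by
      have := (h_bound δR hδ hle).2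
      rwa [Real.rpow_neg hδ.le, ← div_eq_mul_inv]
    calc h δR ≤ K₂ * δR ^ (-γ : ℝ) := h7
      _ ≤ K₂ * (1 + X) := mul_le_mul_of_nonneg_left h6 hK₂.le
      _ ≤ K₂ * (1 + (A₁ + B₁ * (-Real.log R))) :=
          mul_le_mul_of_nonneg_left (by linarith) hK₂.le
      _ = K₂*(1+A₁) + K₂*B₁*(-Real.log R) := by ring
  -- bound when δ > d₀
  obtain ⟨x₀, hx₀mem, hx₀⟩ := (isCompact_Icc (a := d₀) (b := max d₀ M)).exists_isMaxOn
    ⟨d₀, left_mem_Icc.mpr (le_max_left _ _)⟩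
    (hch.mono (fun y hy => hd₀.trans_le hy.1))
  set C₅ : ℝ := h x₀ with hC₅def
  -- global bound
  set C₆ : ℝ := max (K₂*(1+A₁)) C₅ with hC₆def
  set C₇ : ℝ := K₂*B₁ with hC₇def
  have hC₇ : 0 ≤ C₇ := by positivity
  have hglob : ∀ R ∈ Set.Ioc (0:ℝ) 1,
      h (del (k+2) r r' R) ≤ C₆ + C₇ * (-Real.log R) := by
    intro R hR
    have hlognn : 0 ≤ -Real.log R := by
      have := Real.log_nonpos hR.1.le hR.2
      linarith
    rcases le_or_gt (del (k+2) r r' R) d₀ with hle | hlt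
    · have h7 := hsmall R hR hle
      have h8 : K₂*(1+A₁) ≤ C₆ := le_max_left _ _
      have h8' : K₂*B₁*(-Real.log R) = C₇ * (-Real.log R) := by rw [hC₇def]
      linarith
    · have hmem : del (k+2) r r' R ∈ Set.Icc d₀ (max d₀ M) :=
        ⟨hlt.le, le_max_of_le_right (hM R hR)⟩
      have h9 : h (del (k+2) r r' R) ≤ C₅ := hx₀ hmem
      have h10 : C₅ ≤ C₆ := le_max_right _ _
      have h11 : 0 ≤ C₇ * (-Real.log R) := mul_nonneg hC₇ hlognn
      linarith
  -- log bound by rpow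
  have hlogb : ∀ R ∈ Set.Ioc (0:ℝ) 1, -Real.log R ≤ 2 * R ^ (-(1/2) : ℝ) := by
    intro R hR
    have h1 : Real.log R = 2 * Real.log (R ^ ((1:ℝ)/2)) := by
      rw [Real.log_rpow hR.1]; ring
    have hy : 0 < R ^ ((1:ℝ)/2) := Real.rpow_pos_of_pos hR.1 _
    have h2 : -Real.log (R ^ ((1:ℝ)/2)) ≤ (R ^ ((1:ℝ)/2))⁻¹ := by
      have := Real.log_le_sub_one_of_pos (inv_pos.mpr hy)
      rw [Real.log_inv] at this
      linarith
    have h3 : (R ^ ((1:ℝ)/2))⁻¹ = R ^ (-(1/2) : ℝ) := by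
      rw [← Real.rpow_neg hR.1.le]
    rw [h3] at h2
    linarith
  -- final pointwise bound
  set Cfin : ℝ := |C₆| + 2*C₇ with hCfindef
  have hfinal : ∀ R ∈ Set.Ioc (0:ℝ) 1,
      ‖R ^ (k+2-1) * h (del (k+2) r r' R)‖ ≤ Cfin * R ^ (-(1/2) : ℝ) := by
    intro R hR
    have hδ := hδpos R hR
    have hhnn : 0 ≤ h (del (k+2) r r' R) := hh.nonneg _ hδ
    have hRpow : R ^ (k+2-1) ≤ 1 := pow_le_one₀ hR.1.le hR.2
    have hfnn : 0 ≤ R ^ (k+2-1) * h (del (k+2) r r' R) :=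
      mul_nonneg (pow_nonneg hR.1.le _) hhnn
    rw [Real.norm_of_nonneg hfnn]
    have hrp1 : (1:ℝ) ≤ R ^ (-(1/2) : ℝ) := by
      have := Real.rpow_le_rpow_of_exponent_ge hR.1 hR.2 (by norm_num : (-(1/2):ℝ) ≤ 0)
      rwa [Real.rpow_zero] at this
    have hlb := hlogb R hR
    have hgb := hglob R hR
    have hlognn : 0 ≤ -Real.log R := by
      have := Real.log_nonpos hR.1.le hR.2
      linarith
    calc R ^ (k+2-1) * h (del (k+2) r r' R) ≤ 1 * h (del (k+2) r r' R) :=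
          mul_le_mul_of_nonneg_right hRpow hhnn
      _ = h (del (k+2) r r' R) := one_mul _
      _ ≤ C₆ + C₇ * (-Real.log R) := hgb
      _ ≤ |C₆| + C₇ * (2 * R ^ (-(1/2) : ℝ)) := by
          have h12 := mul_le_mul_of_nonneg_left hlb hC₇
          have h13 := le_abs_self C₆
          linarith
      _ ≤ |C₆| * R ^ (-(1/2) : ℝ) + 2*C₇ * R ^ (-(1/2) : ℝ) := by
          have h13 : |C₆| ≤ |C₆| * R ^ (-(1/2) : ℝ) :=
            le_mul_of_one_le_right (abs_nonneg _) hrp1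
          linarith
      _ = Cfin * R ^ (-(1/2) : ℝ) := by rw [hCfindef]; ring
  -- dominating function is integrable
  have hint : IntegrableOn (fun R : ℝ => Cfin * R ^ (-(1/2) : ℝ)) (Set.Ioc 0 1) := by
    have h1 : IntervalIntegrable (fun R : ℝ => R ^ (-(1/2) : ℝ)) volume 0 1 :=
      intervalIntegral.intervalIntegrable_rpow' (by norm_num)
    rw [intervalIntegrable_iff_integrableOn_Ioc_of_le zero_le_one] at h1
    exact h1.const_mul Cfin
  -- measurability
  have hfm : AEStronglyMeasurable (fun R => R ^ (k+2-1) * h (del (k+2) r r' R))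
      (volume.restrict (Set.Ioc (0:ℝ) 1)) := by
    apply ContinuousOn.aestronglyMeasurable _ measurableSet_Ioc
    exact ((continuous_pow _).continuousOn).mul (hch.comp hcdel (fun s hs => hδpos s hs))
  exact hint.mono' hfm ((ae_restrict_iff' measurableSet_Ioc).2 (Eventually.of_forall hfinal))

end
end

section
/- Assume in addition that there exist γ > 0, d₀ > 0 and constants 0 < K₁ ≤ K₂ such that K₁/d^{γ+2} ≤ h''(d) ≤ K₂/d^{γ+2} for all 0 < d ≤ d₀. Let r be a cavitating solution (r ∈ C²((0,1]) ∩ C([0,1]), r' > 0 on (0,1], solving the radial equilibrium equation, r(0) > 0, δ bounded). Then there exist constants C₁ > 0, C₃ > 0, C₂, C₄ ∈ ℝ and R₀ ∈ (0,1) such that for all 0 < R ≤ R₀: C₁ ln(r(R)/R) + C₂ ≤ δ(R)^{−(γ+1)} ≤ C₃ ln(r(R)/R) + C₄. -/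
open Real MeasureTheory Filter Set
open scoped ENNReal NNReal

noncomputable section

set_option maxHeartbeats 2000000 in
/-- under power-law bounds on `h''` near `0`, for a cavitating solution
`δ(R)^{−(γ+1)}` is trapped between two affine functions of `ln(r(R)/R)` near `R = 0`. -/
theorem stmt6 (n : ℕ) (hn : 2 ≤ n) (κ : ℝ) (hκ : 0 < κ)
    (h h' h'' : ℝ → ℝ) (hh : GoodH h h' h'')
    (r r' r'' : ℝ → ℝ) (hr : RadialSol n κ h' r r' r'')
    (γ d₀ K₁ K₂ : ℝ) (hγ : 0 < γ) (hd₀ : 0 < d₀) (hK₁ : 0 < K₁) (hK₁₂ : K₁ ≤ K₂)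
    (hpp_bound : ∀ d : ℝ, 0 < d → d ≤ d₀ →
      K₁ / d ^ (γ + 2) ≤ h'' d ∧ h'' d ≤ K₂ / d ^ (γ + 2))
    (hcont : ContinuousOn r (Set.Icc 0 1)) (hcav : 0 < r 0)
    (hbdd : ∃ M : ℝ, ∀ R ∈ Set.Ioc (0:ℝ) 1, del n r r' R ≤ M) :
    ∃ C₁ C₂ C₃ C₄ R₀ : ℝ, 0 < C₁ ∧ 0 < C₃ ∧ R₀ ∈ Set.Ioo (0:ℝ) 1 ∧
      ∀ R ∈ Set.Ioc (0:ℝ) R₀,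
        C₁ * Real.log (r R / R) + C₂ ≤ (del n r r' R) ^ (-(γ + 1)) ∧
        (del n r r' R) ^ (-(γ + 1)) ≤ C₃ * Real.log (r R / R) + C₄ := by
  obtain ⟨m, rfl⟩ : ∃ m, n = m + 2 := ⟨n - 2, by omega⟩
  clear hn
  set I : Set ℝ := Set.Ioc (0:ℝ) 1 with hI
  -- basic positivity facts
  have hRpos : ∀ R ∈ I, (0:ℝ) < R := fun R hR => hR.1
  have hRne : ∀ R ∈ I, R ≠ 0 := fun R hR => (hR.1).ne'
  have hrpos := hr.pos
  have hqpos := hr.derivPos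
  have hvpos : ∀ R ∈ I, 0 < r R / R := fun R hR => div_pos (hr.pos R hR) hR.1
  have hdel_eq : ∀ R : ℝ, del (m+2) r r' R = r' R * (r R / R) ^ (m+1) := by
    intro R; simp [del]
  have hdelpos : ∀ R ∈ I, 0 < del (m+2) r r' R := by
    intro R hR
    rw [hdel_eq]
    exact mul_pos (hr.derivPos R hR) (pow_pos (hvpos R hR) _)
  -- the stress function and its derivative
  set T : ℝ → ℝ := fun s => Tstress (m+2) κ h' (r' s) (r s / s) with hT
  set E : ℝ → ℝ := fun s => ((m:ℝ)+1) * κ / s * (1 - (r' s / (r s / s))^(m+2)) with hE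
  have hderivT : ∀ R ∈ I, HasDerivWithinAt T (E R) I R := by
    intro R hR
    have hRne' : R ≠ 0 := hRne R hR
    have harne : r R ≠ 0 := (hrpos R hR).ne'
    have hG := hr.equil R hR
    have hrp : HasDerivWithinAt (fun s => (r s)^(m+1))
        (((m+1 : ℕ):ℝ) * (r R)^m * r' R) I R := by
      simpa using (hr.hasDeriv R hR).fun_pow (m+1)
    have hrpne : (r R)^(m+1) ≠ 0 := pow_ne_zero _ harne
    have hdiv := hG.div hrp hrpne
    have heq : ∀ s ∈ I, T s
        = (fun s => s ^ (m+2-1) * Phi1 (m+2) κ h' (r' s) (r s / s)) s / (r s)^(m+1) := by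
      intro s hs
      have hsne : s ≠ 0 := hRne s hs
      have hane : r s ≠ 0 := (hrpos s hs).ne'
      have hvne : r s / s ≠ 0 := div_ne_zero hane hsne
      show κ * (r' s / (r s / s)) ^ (m+2-1) + h' (r' s * (r s / s) ^ (m+2-1))
        = (s ^ (m+2-1) * (κ * (r' s) ^ (m+2-1) + (r s / s) ^ (m+2-1)
            * h' (r' s * (r s / s) ^ (m+2-1)))) / (r s)^(m+1)
      show κ * (r' s / (r s / s)) ^ (m+1) + h' (r' s * (r s / s) ^ (m+1))
        = (s ^ (m+1) * (κ * (r' s) ^ (m+1) + (r s / s) ^ (m+1)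
            * h' (r' s * (r s / s) ^ (m+1)))) / (r s)^(m+1)
      set H := h' (r' s * (r s / s) ^ (m+1))
      rw [eq_div_iff (pow_ne_zero _ hane)]
      rw [div_div_eq_mul_div, div_pow, div_pow, mul_pow]
      field_simp
    refine (hdiv.congr heq (heq R hR)).congr_deriv ?_
    -- derivative value identity
    have hvne : r R / R ≠ 0 := div_ne_zero harne hRne'
    show ((((m+2:ℕ):ℝ) - 1) * R ^ (m+2-2) * Phi2 (m+2) κ h' (r' R) (r R / R) * (r R)^(m+1)
        - (R ^ (m+2-1) * Phi1 (m+2) κ h' (r' R) (r R / R)) * (((m+1 : ℕ):ℝ) * (r R)^m * r' R))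
        / ((r R)^(m+1))^2 = E R
    show ((((m+2:ℕ):ℝ) - 1) * R ^ m * (κ * (r R / R) ^ (m+1) + r' R * (r R / R) ^ m
            * h' (r' R * (r R / R) ^ (m+1))) * (r R)^(m+1)
        - (R ^ (m+1) * (κ * (r' R) ^ (m+1) + (r R / R) ^ (m+1)
            * h' (r' R * (r R / R) ^ (m+1)))) * (((m+1 : ℕ):ℝ) * (r R)^m * r' R))
        / ((r R)^(m+1))^2
        = ((m:ℝ)+1) * κ / R * (1 - (r' R / (r R / R))^(m+2))
    set H := h' (r' R * (r R / R) ^ (m+1))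
    push_cast
    simp only [div_div_eq_mul_div, div_pow, mul_pow]
    field_simp
    ring
  have hTcont : ContinuousOn T I := fun x hx => (hderivT x hx).continuousWithinAt

  -- continuity near 0: r between r0/2 and 3 r0/2
  obtain ⟨R₂, hR₂0, hR₂1, hrbnd⟩ :
      ∃ R₂ : ℝ, 0 < R₂ ∧ R₂ < 1 ∧ ∀ s ∈ Set.Ioc (0:ℝ) R₂,
        r 0 / 2 ≤ r s ∧ r s ≤ 3 * r 0 / 2 := by
    have hc0 : ContinuousWithinAt r (Set.Icc 0 1) 0 := hcont 0 ⟨le_refl 0, zero_le_one⟩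
    rw [Metric.continuousWithinAt_iff] at hc0
    obtain ⟨ε, hε0, hε⟩ := hc0 (r 0 / 2) (by positivity)
    refine ⟨min (ε/2) (1/2), by positivity, lt_of_le_of_lt (min_le_right _ _) (by norm_num), ?_⟩
    intro s hs
    have hs1 : s ∈ Set.Icc (0:ℝ) 1 :=
      ⟨hs.1.le, le_trans hs.2 (le_trans (min_le_right _ _) (by norm_num))⟩
    have hdist : dist s 0 < ε := by
      rw [Real.dist_eq, sub_zero, abs_of_pos hs.1]
      exact lt_of_le_of_lt (le_trans hs.2 (min_le_left _ _)) (by linarith)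
    have h2 := hε hs1 hdist
    rw [Real.dist_eq] at h2
    have h3 := abs_lt.1 h2
    constructor <;> linarith [h3.1, h3.2]
  obtain ⟨M, hM⟩ := hbdd
  set M' : ℝ := max M 1 with hM'def
  have hM'1 : (1:ℝ) ≤ M' := le_max_right _ _
  have hM'del : ∀ R ∈ I, del (m+2) r r' R ≤ M' := fun R hR =>
    le_trans (hM R hR) (le_max_left _ _)
  set c : ℝ := 2*M' + 1 with hcdef
  have hc1 : 1 ≤ c := by linarith
  have hc0 : 0 < c := by linarith
  set R₁ : ℝ := min R₂ (r 0 / (2*c)) with hR₁def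
  have hR₁0 : 0 < R₁ := lt_min hR₂0 (by positivity)
  have hR₁1 : R₁ < 1 := lt_of_le_of_lt (min_le_left _ _) hR₂1
  have hR₁I : R₁ ∈ I := ⟨hR₁0, hR₁1.le⟩
  have hsubI : Set.Ioc (0:ℝ) R₁ ⊆ I := Set.Ioc_subset_Ioc_right hR₁1.le
  have hsubR₂ : Set.Ioc (0:ℝ) R₁ ⊆ Set.Ioc 0 R₂ :=
    Set.Ioc_subset_Ioc_right (min_le_left _ _)
  have hvbig : ∀ s ∈ Set.Ioc (0:ℝ) R₁, c ≤ r s / s := by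
    intro s hs
    have h1 : r 0 / 2 ≤ r s := (hrbnd s (hsubR₂ hs)).1
    have h2 : s ≤ r 0 / (2*c) := le_trans hs.2 (min_le_right _ _)
    rw [le_div_iff₀ hs.1]
    calc c * s ≤ c * (r 0 / (2*c)) := mul_le_mul_of_nonneg_left h2 hc0.le
      _ = r 0 / 2 := by field_simp
      _ ≤ r s := h1
  have hqv : ∀ s ∈ Set.Ioc (0:ℝ) R₁,
      0 < r' s / (r s / s) ∧ r' s / (r s / s) ≤ 1/2 := by
    intro s hs
    have hsI := hsubI hs
    have hv := hvpos s hsI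
    refine ⟨div_pos (hqpos s hsI) hv, ?_⟩
    have hid : r' s / (r s / s) = del (m+2) r r' s / (r s / s)^(m+2) := by
      rw [hdel_eq, div_eq_div_iff hv.ne' (pow_ne_zero _ hv.ne')]
      ring
    rw [hid]
    have hvb := hvbig s hs
    have hv1 : (1:ℝ) ≤ r s / s := le_trans hc1 hvb
    have hpow : c ≤ (r s / s)^(m+2) :=
      le_trans hvb (le_self_pow₀ hv1 (by omega))
    have h5 : del (m+2) r r' s / (r s / s)^(m+2) ≤ M' / (2*M') :=
      div_le_div₀ (by linarith) (hM'del s hsI) (by linarith) (by linarith)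
    have h6 : M' / (2*M') = 1/2 := by
      rw [div_eq_div_iff (by linarith) (by norm_num)]; ring
    linarith
  have hEb : ∀ s ∈ Set.Ioc (0:ℝ) R₁,
      ((m:ℝ)+1)*κ/2 * s⁻¹ ≤ E s ∧ E s ≤ ((m:ℝ)+1)*κ * s⁻¹ := by
    intro s hs
    obtain ⟨hq0, hq2⟩ := hqv s hs
    have hx : 0 ≤ (r' s / (r s / s))^(m+2) := pow_nonneg hq0.le _
    have hx2 : (r' s / (r s / s))^(m+2) ≤ 1/2 := by
      calc (r' s / (r s / s))^(m+2) ≤ (1/2:ℝ)^(m+2) := pow_le_pow_left₀ hq0.le hq2 _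
        _ ≤ (1/2:ℝ)^1 := pow_le_pow_of_le_one (by norm_num) (by norm_num) (by omega)
        _ = 1/2 := pow_one _
    have hs0 := hs.1
    have hfac : (0:ℝ) ≤ ((m:ℝ)+1) * κ / s := by positivity
    have hEs : E s = ((m:ℝ)+1) * κ / s * (1 - (r' s / (r s / s))^(m+2)) := rfl
    constructor
    · rw [hEs]
      have := mul_le_mul_of_nonneg_left (by linarith : (1:ℝ)/2 ≤ 1 - (r' s / (r s / s))^(m+2)) hfac
      calc ((m:ℝ)+1)*κ/2 * s⁻¹ = ((m:ℝ)+1)*κ/s * (1/2) := by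
            field_simp
        _ ≤ _ := this
    · rw [hEs]
      have := mul_le_mul_of_nonneg_left (by linarith : 1 - (r' s / (r s / s))^(m+2) ≤ 1) hfac
      calc ((m:ℝ)+1)*κ/s * (1 - (r' s / (r s / s))^(m+2)) ≤ ((m:ℝ)+1)*κ/s * 1 := this
        _ = ((m:ℝ)+1)*κ * s⁻¹ := by field_simp
  set c₁ : ℝ := ((m:ℝ)+1)*κ/2 with hc₁def
  set c₂ : ℝ := ((m:ℝ)+1)*κ with hc₂def
  have hc₁pos : 0 < c₁ := by positivity
  have hc₂pos : 0 < c₂ := by positivity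
  have hlogcont : ContinuousOn Real.log (Set.Ioc (0:ℝ) R₁) := fun x hx =>
    (Real.continuousAt_log hx.1.ne').continuousWithinAt
  have hTconts : ContinuousOn T (Set.Ioc (0:ℝ) R₁) := hTcont.mono hsubI
  have hderivAt : ∀ x ∈ Set.Ioo (0:ℝ) R₁, HasDerivAt T (E x) x := by
    intro x hx
    have hxlt1 : x < 1 := lt_of_lt_of_le hx.2 hR₁1.le
    exact (hderivT x ⟨hx.1, hxlt1.le⟩).hasDerivAt (Ioc_mem_nhds hx.1 hxlt1)
  have hF₁ : MonotoneOn (fun s => T s - c₁ * Real.log s) (Set.Ioc (0:ℝ) R₁) := by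
    refine monotoneOn_of_hasDerivWithinAt_nonneg (f' := fun x => E x - c₁ * x⁻¹)
      (convex_Ioc _ _) (hTconts.sub (continuousOn_const.mul hlogcont)) ?_ ?_
    · rw [interior_Ioc]
      exact fun x hx => (((hderivAt x hx).sub
        ((Real.hasDerivAt_log hx.1.ne').const_mul c₁))).hasDerivWithinAt
    · rw [interior_Ioc]
      intro x hx
      have h1 := (hEb x ⟨hx.1, hx.2.le⟩).1
      have h2 : c₁ * x⁻¹ = ((m:ℝ)+1)*κ/2 * x⁻¹ := rfl
      linarith
  have hF₂ : AntitoneOn (fun s => T s - c₂ * Real.log s) (Set.Ioc (0:ℝ) R₁) := by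
    refine antitoneOn_of_hasDerivWithinAt_nonpos (f' := fun x => E x - c₂ * x⁻¹)
      (convex_Ioc _ _) (hTconts.sub (continuousOn_const.mul hlogcont)) ?_ ?_
    · rw [interior_Ioc]
      exact fun x hx => (((hderivAt x hx).sub
        ((Real.hasDerivAt_log hx.1.ne').const_mul c₂))).hasDerivWithinAt
    · rw [interior_Ioc]
      intro x hx
      have h1 := (hEb x ⟨hx.1, hx.2.le⟩).2
      have h2 : c₂ * x⁻¹ = ((m:ℝ)+1)*κ * x⁻¹ := rfl
      linarith
  have hTub : ∀ R ∈ Set.Ioc (0:ℝ) R₁,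
      T R ≤ T R₁ + c₁ * Real.log R - c₁ * Real.log R₁ := by
    intro R hR
    have := hF₁ hR ⟨hR₁0, le_refl R₁⟩ hR.2
    simp only [] at this
    linarith
  have hTlb : ∀ R ∈ Set.Ioc (0:ℝ) R₁,
      T R₁ + c₂ * Real.log R - c₂ * Real.log R₁ ≤ T R := by
    intro R hR
    have := hF₂ hR ⟨hR₁0, le_refl R₁⟩ hR.2
    simp only [] at this
    linarith
  have hh'T : ∀ R ∈ Set.Ioc (0:ℝ) R₁,
      T R - κ ≤ h' (del (m+2) r r' R) ∧ h' (del (m+2) r r' R) ≤ T R := by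
    intro R hR
    have hRI := hsubI hR
    have hTval : T R = κ * (r' R / (r R / R))^(m+1) + h' (del (m+2) r r' R) := by
      rw [hdel_eq]; rfl
    obtain ⟨hq0, hq2⟩ := hqv R hR
    have h0 : 0 ≤ (r' R / (r R / R))^(m+1) := pow_nonneg hq0.le _
    have h1 : (r' R / (r R / R))^(m+1) ≤ 1 := pow_le_one₀ hq0.le (by linarith)
    have h2 : 0 ≤ κ * (r' R / (r R / R))^(m+1) := mul_nonneg hκ.le h0
    have h3 : κ * (r' R / (r R / R))^(m+1) ≤ κ * 1 := mul_le_mul_of_nonneg_left h1 hκ.le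
    rw [hTval]
    constructor <;> linarith
  have hmono' : StrictMonoOn h' (Set.Ioi (0:ℝ)) := by
    apply strictMonoOn_of_deriv_pos (convex_Ioi 0)
    · exact fun x hx => ((hh.deriv2 x hx).continuousAt).continuousWithinAt
    · intro x hx
      rw [interior_Ioi] at hx
      rw [(hh.deriv2 x hx).deriv]
      exact hh.hpp_pos x hx
  set B : ℝ := (h' d₀ - T R₁ + c₁ * Real.log R₁ - 1) / c₁ with hBdef
  set R₀ : ℝ := min (R₁/2) (Real.exp B) with hR₀def
  have hR₀0 : 0 < R₀ := lt_min (by linarith) (Real.exp_pos _)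
  have hR₀R₁ : R₀ < R₁ := lt_of_le_of_lt (min_le_left _ _) (by linarith)
  have hR₀1 : R₀ < 1 := lt_trans hR₀R₁ hR₁1
  have hsub₀ : Set.Ioc (0:ℝ) R₀ ⊆ Set.Ioc 0 R₁ := Set.Ioc_subset_Ioc_right hR₀R₁.le
  have hTsmall : ∀ R ∈ Set.Ioc (0:ℝ) R₀, T R < h' d₀ := by
    intro R hR
    have hR1 := hsub₀ hR
    have h1 := hTub R hR1
    have hlog : Real.log R ≤ B := by
      calc Real.log R ≤ Real.log R₀ := Real.log_le_log hR.1 hR.2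
        _ ≤ Real.log (Real.exp B) := Real.log_le_log hR₀0 (min_le_right _ _)
        _ = B := Real.log_exp B
    have h2 : c₁ * Real.log R ≤ c₁ * B := mul_le_mul_of_nonneg_left hlog hc₁pos.le
    have hcB : c₁ * B = h' d₀ - T R₁ + c₁ * Real.log R₁ - 1 := by
      rw [hBdef]; field_simp
    linarith
  have hdeld₀ : ∀ R ∈ Set.Ioc (0:ℝ) R₀, del (m+2) r r' R < d₀ := by
    intro R hR
    by_contra hcon
    push_neg at hcon
    have hdI := hdelpos R (hsubI (hsub₀ hR))
    have h1 : h' d₀ ≤ h' (del (m+2) r r' R) := by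
      rcases eq_or_lt_of_le hcon with he | hl
      · rw [← he]
      · exact (hmono' (Set.mem_Ioi.mpr hd₀) (Set.mem_Ioi.mpr hdI) hl).le
    have h2 := (hh'T R (hsub₀ hR)).2
    have h3 := hTsmall R hR
    linarith
  -- integrate the bounds on h''
  have hγ1 : (0:ℝ) < γ + 1 := by linarith
  have hγ1ne : γ + 1 ≠ 0 := hγ1.ne'
  have hK₂pos : 0 < K₂ := lt_of_lt_of_le hK₁ hK₁₂
  have hrpowderiv : ∀ (K : ℝ), ∀ x ∈ Set.Ioo (0:ℝ) d₀,
      HasDerivAt (fun s => h' s + K/(γ+1) * s ^ (-(γ+1)))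
        (h'' x - K * x ^ (-(γ+2))) x := by
    intro K x hx
    have hx0 := hx.1
    have hd := (Real.hasDerivAt_rpow_const (p := -(γ+1)) (Or.inl hx0.ne')).const_mul (K/(γ+1))
    have h1 : K/(γ+1) * (-(γ+1) * x ^ (-(γ+1) - 1)) = -(K * x ^ (-(γ+2))) := by
      have he : -(γ+1) - 1 = -(γ+2) := by ring
      rw [he]; field_simp
    have h2 := (hh.deriv2 x hx0).fun_add hd
    rw [h1] at h2
    simpa [sub_eq_add_neg] using h2
  have hrpowcont : ∀ (K : ℝ),
      ContinuousOn (fun s => h' s + K/(γ+1) * s ^ (-(γ+1))) (Set.Ioc (0:ℝ) d₀) := by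
    intro K x hx
    have h1 : ContinuousAt h' x := (hh.deriv2 x hx.1).continuousAt
    have h2 : ContinuousAt (fun s : ℝ => s ^ (-(γ+1))) x :=
      Real.continuousAt_rpow_const x _ (Or.inl hx.1.ne')
    exact (h1.add (continuousAt_const.mul h2)).continuousWithinAt
  have hrpow_eq : ∀ (K : ℝ) (x : ℝ), 0 < x → K / x ^ (γ+2) = K * x ^ (-(γ+2)) := by
    intro K x hx
    rw [Real.rpow_neg hx.le, div_eq_mul_inv]
  have hbound_up : ∀ d ∈ Set.Ioc (0:ℝ) d₀,
      h' d + K₁/(γ+1) * d ^ (-(γ+1)) ≤ h' d₀ + K₁/(γ+1) * d₀ ^ (-(γ+1)) := by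
    have hmon : MonotoneOn (fun s => h' s + K₁/(γ+1) * s ^ (-(γ+1))) (Set.Ioc (0:ℝ) d₀) := by
      refine monotoneOn_of_hasDerivWithinAt_nonneg
        (f' := fun x => h'' x - K₁ * x ^ (-(γ+2)))
        (convex_Ioc _ _) (hrpowcont K₁) ?_ ?_
      · rw [interior_Ioc]
        exact fun x hx => (hrpowderiv K₁ x hx).hasDerivWithinAt
      · rw [interior_Ioc]
        intro x hx
        have h1 := (hpp_bound x hx.1 hx.2.le).1
        rw [hrpow_eq K₁ x hx.1] at h1
        show (0:ℝ) ≤ h'' x - K₁ * x ^ (-(γ+2))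
        linarith
    exact fun d hd => hmon hd ⟨hd₀, le_refl d₀⟩ hd.2
  have hbound_lo : ∀ d ∈ Set.Ioc (0:ℝ) d₀,
      h' d₀ + K₂/(γ+1) * d₀ ^ (-(γ+1)) ≤ h' d + K₂/(γ+1) * d ^ (-(γ+1)) := by
    have hant : AntitoneOn (fun s => h' s + K₂/(γ+1) * s ^ (-(γ+1))) (Set.Ioc (0:ℝ) d₀) := by
      refine antitoneOn_of_hasDerivWithinAt_nonpos
        (f' := fun x => h'' x - K₂ * x ^ (-(γ+2)))
        (convex_Ioc _ _) (hrpowcont K₂) ?_ ?_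
      · rw [interior_Ioc]
        exact fun x hx => (hrpowderiv K₂ x hx).hasDerivWithinAt
      · rw [interior_Ioc]
        intro x hx
        have h1 := (hpp_bound x hx.1 hx.2.le).2
        rw [hrpow_eq K₂ x hx.1] at h1
        show h'' x - K₂ * x ^ (-(γ+2)) ≤ (0:ℝ)
        linarith
    exact fun d hd => hant hd ⟨hd₀, le_refl d₀⟩ hd.2
  set a₂ : ℝ := h' d₀ + K₁/(γ+1) * d₀ ^ (-(γ+1)) with ha₂def
  set a₁ : ℝ := h' d₀ + K₂/(γ+1) * d₀ ^ (-(γ+1)) with ha₁def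
  refine ⟨(γ+1)/K₂ * c₁,
    (γ+1)/K₂ * (a₁ - T R₁ + c₁ * Real.log R₁ - c₁ * Real.log (3 * r 0 / 2)),
    (γ+1)/K₁ * c₂,
    (γ+1)/K₁ * (a₂ + κ - T R₁ + c₂ * Real.log R₁ - c₂ * Real.log (r 0 / 2)),
    R₀,
    mul_pos (div_pos hγ1 hK₂pos) hc₁pos,
    mul_pos (div_pos hγ1 hK₁) hc₂pos,
    ⟨hR₀0, hR₀1⟩, ?_⟩
  intro R hR
  have hR1 : R ∈ Set.Ioc (0:ℝ) R₁ := hsub₀ hR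
  have hRI : R ∈ I := hsubI hR1
  have hR2' : R ∈ Set.Ioc (0:ℝ) R₂ := hsubR₂ hR1
  set d : ℝ := del (m+2) r r' R with hddef
  have hd0 : 0 < d := hdelpos R hRI
  have hdIoc : d ∈ Set.Ioc (0:ℝ) d₀ := ⟨hd0, (hdeld₀ R hR).le⟩
  have hup := hbound_up d hdIoc
  have hlo := hbound_lo d hdIoc
  obtain ⟨hh'lb, hh'ub⟩ := hh'T R hR1
  have hTub' := hTub R hR1
  have hTlb' := hTlb R hR1
  have hr0R : 0 < r R := hrpos R hRI
  have hL : Real.log (r R / R) = Real.log (r R) - Real.log R :=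
    Real.log_div hr0R.ne' hR.1.ne'
  obtain ⟨hrlo, hrhi⟩ := hrbnd R hR2'
  have hloghi : Real.log (r R) ≤ Real.log (3 * r 0 / 2) := Real.log_le_log hr0R hrhi
  have hloglo : Real.log (r 0 / 2) ≤ Real.log (r R) := Real.log_le_log (by positivity) hrlo
  constructor
  · -- lower bound
    have hfac : (0:ℝ) ≤ (γ+1)/K₂ := by positivity
    have hstep1 : (γ+1)/K₂ * (a₁ - h' d) ≤ d ^ (-(γ+1)) := by
      have h2 := mul_le_mul_of_nonneg_left hlo hfac
      have h4 : ∀ X : ℝ, (γ+1)/K₂ * (h' d + K₂/(γ+1) * X)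
          = (γ+1)/K₂ * h' d + X := by
        intro X
        have hK₂ne : K₂ ≠ 0 := hK₂pos.ne'
        field_simp
      rw [h4 (d ^ (-(γ+1)))] at h2
      have h5 : (γ+1)/K₂ * (a₁ - h' d) = (γ+1)/K₂ * a₁ - (γ+1)/K₂ * h' d := by ring
      rw [h5]
      linarith
    have hX : c₁ * Real.log (r R / R)
        + (a₁ - T R₁ + c₁ * Real.log R₁ - c₁ * Real.log (3 * r 0 / 2)) ≤ a₁ - h' d := by
      have e1 : c₁ * Real.log R = c₁ * Real.log (r R) - c₁ * Real.log (r R / R) := by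
        rw [hL]; ring
      have e2 : c₁ * Real.log (r R) ≤ c₁ * Real.log (3 * r 0 / 2) :=
        mul_le_mul_of_nonneg_left hloghi hc₁pos.le
      linarith
    calc (γ+1)/K₂ * c₁ * Real.log (r R / R)
          + (γ+1)/K₂ * (a₁ - T R₁ + c₁ * Real.log R₁ - c₁ * Real.log (3 * r 0 / 2))
        = (γ+1)/K₂ * (c₁ * Real.log (r R / R)
          + (a₁ - T R₁ + c₁ * Real.log R₁ - c₁ * Real.log (3 * r 0 / 2))) := by ring
      _ ≤ (γ+1)/K₂ * (a₁ - h' d) := mul_le_mul_of_nonneg_left hX hfac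
      _ ≤ d ^ (-(γ+1)) := hstep1
  · -- upper bound
    have hfac : (0:ℝ) ≤ (γ+1)/K₁ := by positivity
    have hstep1 : d ^ (-(γ+1)) ≤ (γ+1)/K₁ * (a₂ - h' d) := by
      have h2 := mul_le_mul_of_nonneg_left hup hfac
      have h4 : ∀ X : ℝ, (γ+1)/K₁ * (h' d + K₁/(γ+1) * X)
          = (γ+1)/K₁ * h' d + X := by
        intro X
        have hK₁ne : K₁ ≠ 0 := hK₁.ne'
        field_simp
      rw [h4 (d ^ (-(γ+1)))] at h2
      have h5 : (γ+1)/K₁ * (a₂ - h' d) = (γ+1)/K₁ * a₂ - (γ+1)/K₁ * h' d := by ring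
      rw [h5]
      linarith
    have hX : a₂ - h' d ≤ c₂ * Real.log (r R / R)
        + (a₂ + κ - T R₁ + c₂ * Real.log R₁ - c₂ * Real.log (r 0 / 2)) := by
      have e1 : c₂ * Real.log R = c₂ * Real.log (r R) - c₂ * Real.log (r R / R) := by
        rw [hL]; ring
      have e2 : c₂ * Real.log (r 0 / 2) ≤ c₂ * Real.log (r R) :=
        mul_le_mul_of_nonneg_left hloglo hc₂pos.le
      linarith
    calc d ^ (-(γ+1)) ≤ (γ+1)/K₁ * (a₂ - h' d) := hstep1
      _ ≤ (γ+1)/K₁ * (c₂ * Real.log (r R / R)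
          + (a₂ + κ - T R₁ + c₂ * Real.log R₁ - c₂ * Real.log (r 0 / 2))) :=
        mul_le_mul_of_nonneg_left hX hfac
      _ = (γ+1)/K₁ * c₂ * Real.log (r R / R)
          + (γ+1)/K₁ * (a₂ + κ - T R₁ + c₂ * Real.log R₁ - c₂ * Real.log (r 0 / 2)) := by ring



end
end

section
/- Let r : [ε,1] → (0,∞) be C¹ with r'(R) > 0 and r(1) = λ, where 0 < ε < 1. Then the following null-Lagrangian identity holds: ∫_ε¹ R^{n−1} Φ(r'(R), r(R)/R, …, r(R)/R) dR − (κ(n−1)/n) r(ε)ⁿ ln(r(ε)/ε) = ∫_ε¹ R^{n−1} [ (κ/n)(r'(R))ⁿ + h(δ(R)) + κ(n−1) δ(R) (1/n + ln(r(R)/R)) ] dR − (κ(n−1)/n) λⁿ ln λ, where δ(R) = r'(R)(r(R)/R)^{n−1}. -/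
open Real MeasureTheory Filter Set
open scoped ENNReal NNReal

noncomputable section

/-- the null-Lagrangian identity relating the original energy with its
boundary correction to the modified integrand, for any `C¹` deformation of the
punctured ball `[ε,1]` with `r(1) = λ`. -/
theorem stmt7 (n : ℕ) (hn : 2 ≤ n) (κ : ℝ) (hκ : 0 < κ)
    (h h' : ℝ → ℝ) (hh : ∀ d : ℝ, 0 < d → HasDerivAt h (h' d) d)
    (ε lam : ℝ) (hε : 0 < ε) (hε1 : ε < 1)
    (r r' : ℝ → ℝ)
    (hderiv : ∀ R ∈ Set.Icc ε 1, HasDerivWithinAt r (r' R) (Set.Icc ε 1) R)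
    (hc1 : ContinuousOn r' (Set.Icc ε 1))
    (hpos : ∀ R ∈ Set.Icc ε 1, 0 < r R)
    (hdpos : ∀ R ∈ Set.Icc ε 1, 0 < r' R)
    (hbc : r 1 = lam) :
    (∫ R in Set.Ioc ε 1, R ^ (n - 1) * Phi n κ h (r' R) (r R / R))
        - κ * ((n:ℝ) - 1) / n * (r ε) ^ n * Real.log (r ε / ε)
      = (∫ R in Set.Ioc ε 1, R ^ (n - 1) *
          ((κ / n) * (r' R) ^ n + h (del n r r' R) +
            κ * ((n:ℝ) - 1) * del n r r' R * (1 / n + Real.log (r R / R))))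
        - κ * ((n:ℝ) - 1) / n * lam ^ n * Real.log lam := by
  have hle : ε ≤ 1 := hε1.le
  have hR0 : ∀ R ∈ Set.Icc ε 1, (0:ℝ) < R := fun R hR => lt_of_lt_of_le hε hR.1
  have rcont : ContinuousOn r (Set.Icc ε 1) := fun R hR => (hderiv R hR).continuousWithinAt
  set F : ℝ → ℝ := fun R => κ * ((n:ℝ) - 1) / n * (r R ^ n * Real.log (r R / R)) with hF
  set f1 : ℝ → ℝ := fun R => R ^ (n - 1) * Phi n κ h (r' R) (r R / R) with hf1
  set f2 : ℝ → ℝ := fun R => R ^ (n - 1) *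
      ((κ / n) * (r' R) ^ n + h (del n r r' R) +
        κ * ((n:ℝ) - 1) * del n r r' R * (1 / n + Real.log (r R / R))) with hf2
  -- derivative of F equals f2 - f1 on Icc ε 1
  have hderivF : ∀ R ∈ Set.Icc ε 1, HasDerivWithinAt F (f2 R - f1 R) (Set.Icc ε 1) R := by
    intro R hR
    have hRpos := hR0 R hR
    have hrpos := hpos R hR
    have hrne : r R ≠ 0 := ne_of_gt hrpos
    have hRne : R ≠ 0 := ne_of_gt hRpos
    have hpow := (hderiv R hR).pow n
    have hlogr := (Real.hasDerivAt_log hrne).comp_hasDerivWithinAt R (hderiv R hR)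
    have hlogR : HasDerivWithinAt (fun y : ℝ => Real.log y) R⁻¹ (Set.Icc ε 1) R :=
      (Real.hasDerivAt_log hRne).hasDerivWithinAt
    have hlog : HasDerivWithinAt (fun y => Real.log (r y / y)) ((r R)⁻¹ * r' R - R⁻¹)
        (Set.Icc ε 1) R := by
      refine (hlogr.sub hlogR).congr (fun y hy => ?_) ?_
      · exact Real.log_div (ne_of_gt (hpos y hy)) (ne_of_gt (hR0 y hy))
      · exact Real.log_div hrne hRne
    have hd := (hpow.mul hlog).const_mul (κ * ((n:ℝ) - 1) / n)
    convert hd using 1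
    · rfl
    · rfl
    · rfl
    simp only [hf1, hf2, Phi, del]
    obtain ⟨k, rfl⟩ : ∃ k, n = k + 1 := ⟨n - 1, by omega⟩
    simp only [Nat.add_sub_cancel, Pi.pow_apply, div_pow]
    push_cast
    field_simp
    ring
  have hFcont : ContinuousOn F (Set.Icc ε 1) := fun R hR => (hderivF R hR).continuousWithinAt
  -- continuity of f1, f2
  have hq : ContinuousOn (fun R => r R / R) (Set.Icc ε 1) :=
    rcont.div continuous_id.continuousOn (fun R hR => ne_of_gt (hR0 R hR))
  have hconth : ContinuousOn h (Set.Ioi 0) := fun d hd => ((hh d hd).continuousAt).continuousWithinAt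
  have hcomp : ContinuousOn (fun R => h (r' R * (r R / R) ^ (n - 1))) (Set.Icc ε 1) :=
    hconth.comp (hc1.mul (hq.pow _)) (fun R hR =>
      mul_pos (hdpos R hR) (pow_pos (div_pos (hpos R hR) (hR0 R hR)) _))
  have hcontlog : ContinuousOn (fun R => Real.log (r R / R)) (Set.Icc ε 1) :=
    hq.log (fun R hR => ne_of_gt (div_pos (hpos R hR) (hR0 R hR)))
  have hcont1 : ContinuousOn f1 (Set.Icc ε 1) := by
    simp only [hf1, Phi]
    exact ((continuous_pow _).continuousOn).mul
      ((continuousOn_const.mul ((hc1.pow _).add (continuousOn_const.mul (hq.pow _)))).add hcomp)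
  have hcont2 : ContinuousOn f2 (Set.Icc ε 1) := by
    simp only [hf2, del]
    exact ((continuous_pow _).continuousOn).mul
      (((continuousOn_const.mul (hc1.pow _)).add hcomp).add
        ((continuousOn_const.mul (hc1.mul (hq.pow _))).mul (continuousOn_const.add hcontlog)))
  have hintg : IntervalIntegrable (fun R => f2 R - f1 R) volume ε 1 := by
    apply ContinuousOn.intervalIntegrable
    rw [Set.uIcc_of_le hle]
    exact hcont2.sub hcont1
  have hFTC : ∫ R in ε..1, (f2 R - f1 R) = F 1 - F ε :=
    intervalIntegral.integral_eq_sub_of_hasDeriv_right_of_le hle hFcont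
      (fun x hx => ((hderivF x (Set.Ioo_subset_Icc_self hx)).hasDerivAt
        (Icc_mem_nhds hx.1 hx.2)).hasDerivWithinAt) hintg
  have h2 : ∫ R in Set.Ioc ε 1, (f2 R - f1 R) = F 1 - F ε := by
    rw [← intervalIntegral.integral_of_le hle]; exact hFTC
  have hi1 : IntegrableOn f1 (Set.Ioc ε 1) volume :=
    (hcont1.integrableOn_Icc).mono_set Set.Ioc_subset_Icc_self
  have hi2 : IntegrableOn f2 (Set.Ioc ε 1) volume :=
    (hcont2.integrableOn_Icc).mono_set Set.Ioc_subset_Icc_self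
  have hsplit : ∫ R in Set.Ioc ε 1, (f2 R - f1 R)
      = (∫ R in Set.Ioc ε 1, f2 R) - ∫ R in Set.Ioc ε 1, f1 R :=
    MeasureTheory.integral_sub hi2 hi1
  have hF1 : F 1 = κ * ((n:ℝ) - 1) / n * lam ^ n * Real.log lam := by
    simp only [hF]; rw [hbc, div_one]; ring
  have hFε : F ε = κ * ((n:ℝ) - 1) / n * (r ε) ^ n * Real.log (r ε / ε) := by
    simp only [hF]; ring
  linarith [h2, hsplit, hF1, hFε]

end
end
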